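/- arXiv:2009.04900 — 2 statements merged into one kernel-verified Lean document; each statement's English description precedes it below -/
import Mathlib

section
/- Let Q_{S6}(x) = 1 + Σ_{n≥1} |A_{S6}(n)| xⁿ be the formal power series in x over ℚ counting the paths in A_{S6}(n). Then 2x(x−5) · Q_{S6}(x) = −1 − 4x + x² + √((1−x)(1−11x+7x²−x³)), where the square root denotes the unique formal power series with constant term 1 whose square is (1−x)(1−11x+7x²−x³). -/
/-- A lattice path from `(0,0)` to `(2n,0)` with steps in `S` that never goes
below the x-axis, encoded as the list of its steps. -/
def IsPath (S : Set (ℤ × ℤ)) (n : ℕ) (p : List (ℤ × ℤ)) : Prop :=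
  (∀ s ∈ p, s ∈ S) ∧
  (p.map Prod.fst).sum = 2 * n ∧
  (p.map Prod.snd).sum = 0 ∧
  ∀ q : List (ℤ × ℤ), q <+: p → 0 ≤ (q.map Prod.snd).sum

def S1 : Set (ℤ × ℤ) := {(1, 1), (1, -1)}
def S2 : Set (ℤ × ℤ) := {s | ∃ r : ℤ, 0 < r ∧ (s = (r, r) ∨ s = (r, -r))}
def S3 : Set (ℤ × ℤ) := {(1, 1), (1, -1), (2, 0)}
def S4 : Set (ℤ × ℤ) := {s | ∃ r : ℤ, 0 < r ∧ (s = (r, r) ∨ s = (r, -r) ∨ s = (2 * r, 0))}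
def S5 : Set (ℤ × ℤ) := {s | s = (1, 1) ∨ s = (1, -1) ∨ ∃ r : ℤ, 0 < r ∧ s = (2 * r, 0)}
def S6 : Set (ℤ × ℤ) := {s | (∃ r : ℤ, 0 < r ∧ (s = (r, r) ∨ s = (r, -r))) ∨ s = (2, 0)}

/-- Number of runs: vertices lying between two consecutive steps of the same kind. -/
def runs (p : List (ℤ × ℤ)) : ℕ :=
  (p.zip p.tail).countP (fun q => q.1 == q.2)

/-- Number of diagonal runs: vertices between two consecutive equal non-horizontal steps. -/
def dr (p : List (ℤ × ℤ)) : ℕ :=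
  (p.zip p.tail).countP (fun q => q.1 == q.2 && q.1.2 != 0)

/-- Number of horizontal runs: vertices between two consecutive horizontal steps. -/
def hr (p : List (ℤ × ℤ)) : ℕ :=
  (p.zip p.tail).countP (fun q => q.1 == q.2 && q.1.2 == 0)

/-- The path has no horizontal step lying on the x-axis. -/
def NoFlatOnAxis (p : List (ℤ × ℤ)) : Prop :=
  ∀ q s, q ++ [s] <+: p → s.2 = 0 → (q.map Prod.snd).sum ≠ 0

namespace S6GF

abbrev Step := ℤ × ℤ

def fsum (p : List Step) : ℤ := (p.map Prod.fst).sum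
def ssum (p : List Step) : ℤ := (p.map Prod.snd).sum

@[simp] lemma fsum_nil : fsum [] = 0 := rfl
@[simp] lemma ssum_nil : ssum [] = 0 := rfl
@[simp] lemma fsum_cons (s : Step) (p : List Step) : fsum (s :: p) = s.1 + fsum p := by
  simp [fsum]
@[simp] lemma ssum_cons (s : Step) (p : List Step) : ssum (s :: p) = s.2 + ssum p := by
  simp [ssum]
@[simp] lemma fsum_append (p q : List Step) : fsum (p ++ q) = fsum p + fsum q := by
  simp [fsum]
@[simp] lemma ssum_append (p q : List Step) : ssum (p ++ q) = ssum p + ssum q := by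
  simp [ssum]

/-- facts about S6 steps -/
lemma step_fst_pos {s : Step} (hs : s ∈ S6) : 1 ≤ s.1 := by
  rcases hs with ⟨r, hr, h | h⟩ | h <;> subst h <;> simp <;> omega
lemma step_snd_eq_zero {s : Step} (hs : s ∈ S6) (h : s.2 = 0) : s = (2, 0) := by
  rcases hs with ⟨r, hr, h' | h'⟩ | h' <;> subst h' <;> simp_all <;> omega
lemma step_snd_pos {s : Step} (hs : s ∈ S6) (h : 0 < s.2) : s = (s.2, s.2) ∧ 0 < s.2 := by
  rcases hs with ⟨r, hr, h' | h'⟩ | h' <;> subst h' <;> simp_all <;> omega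
lemma step_snd_neg {s : Step} (hs : s ∈ S6) (h : s.2 < 0) : s = (-s.2, s.2) ∧ s.2 < 0 := by
  rcases hs with ⟨r, hr, h' | h'⟩ | h' <;> subst h' <;> simp_all <;> omega
lemma step_parity {s : Step} (hs : s ∈ S6) : (s.1 - s.2) % 2 = 0 ∨ (s.1 + s.2) % 2 = 0 := by
  rcases hs with ⟨r, hr, h' | h'⟩ | h' <;> subst h' <;> simp <;> omega

lemma up_mem {r : ℤ} (hr : 0 < r) : ((r, r) : Step) ∈ S6 := Or.inl ⟨r, hr, Or.inl rfl⟩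
lemma down_mem {r : ℤ} (hr : 0 < r) : ((r, -r) : Step) ∈ S6 := Or.inl ⟨r, hr, Or.inr rfl⟩
lemma flat_mem : ((2, 0) : Step) ∈ S6 := Or.inr rfl

def Steps (p : List Step) : Prop := ∀ s ∈ p, s ∈ S6

/-- for S6 paths, fsum and ssum have the same parity -/
lemma fsum_even {p : List Step} (hp : Steps p) (h0 : ssum p = 0) : ∃ k : ℕ, fsum p = 2 * k := by
  have key : ∀ q : List Step, Steps q → (fsum q - ssum q) % 2 = 0 := by
    intro q hq
    induction q with
    | nil => simp
    | cons a t ih =>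
      have ha := hq a (List.mem_cons_self)
      have ht : Steps t := fun s hs => hq s (List.mem_cons_of_mem a hs)
      have h1 : (a.1 - a.2) % 2 = 0 := by
        rcases ha with ⟨r, hr, h' | h'⟩ | h' <;> subst h' <;> simp <;> omega
      have := ih ht
      simp only [fsum_cons, ssum_cons]
      omega
  have h2 := key p hp
  rw [h0] at h2
  have hpos : 0 ≤ fsum p := by
    have : ∀ q : List Step, Steps q → 0 ≤ fsum q := by
      intro q hq
      induction q with
      | nil => simp
      | cons a t ih =>
        have := step_fst_pos (hq a (List.mem_cons_self))
        have := ih (fun s hs => hq s (List.mem_cons_of_mem a hs))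
        simp only [fsum_cons]; omega
    exact this p hp
  refine ⟨(fsum p).toNat / 2, ?_⟩
  omega

lemma fsum_nonneg {p : List Step} (hp : Steps p) : 0 ≤ fsum p := by
  induction p with
  | nil => simp
  | cons a t ih =>
    have := step_fst_pos (hp a (List.mem_cons_self))
    have := ih (fun s hs => hp s (List.mem_cons_of_mem a hs))
    simp only [fsum_cons]; omega

lemma length_le_fsum {p : List Step} (hp : Steps p) : (p.length : ℤ) ≤ fsum p := by
  induction p with
  | nil => simp
  | cons a t ih =>
    have := step_fst_pos (hp a (List.mem_cons_self))
    have := ih (fun s hs => hp s (List.mem_cons_of_mem a hs))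
    simp only [fsum_cons, List.length_cons]
    push_cast
    omega

lemma eq_nil_of_fsum_eq_zero {p : List Step} (hp : Steps p) (h : fsum p = 0) : p = [] := by
  cases p with
  | nil => rfl
  | cons a t =>
    exfalso
    have h1 := step_fst_pos (hp a (List.mem_cons_self))
    have h2 := fsum_nonneg (fun s hs => hp s (List.mem_cons_of_mem a hs))
    simp only [fsum_cons] at h
    omega

end S6GF

namespace S6GF

def Nonneg (p : List Step) : Prop := ∀ q, q <+: p → 0 ≤ ssum q

/-- all closed F-world paths of semilength n -/
def WS (n : ℕ) : Set (List Step) :=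
  {p | Steps p ∧ Nonneg p ∧ fsum p = 2 * n ∧ ssum p = 0}

/-- paths with no flat on axis -/
def QS (n : ℕ) : Set (List Step) := {p | p ∈ WS n ∧ NoFlatOnAxis p}

/-- elevated paths: nonempty, start with an up step, interior strictly positive -/
def Elev (p : List Step) : Prop :=
  Steps p ∧ ssum p = 0 ∧ (∃ s t, p = s :: t ∧ 0 < s.2) ∧
    ∀ q, q <+: p → q ≠ [] → q ≠ p → 1 ≤ ssum q

def ES (n : ℕ) : Set (List Step) := {p | Elev p ∧ fsum p = 2 * n}

/-- starts with an up step -/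
def US (n : ℕ) : Set (List Step) := {p | p ∈ WS n ∧ ∃ s t, p = s :: t ∧ 0 < s.2}
/-- ends with a down step -/
def DS (n : ℕ) : Set (List Step) := {p | p ∈ WS n ∧ ∃ s t, p = t ++ [s] ∧ s.2 < 0}
/-- starts up and ends down -/
def BS (n : ℕ) : Set (List Step) :=
  {p | p ∈ WS n ∧ (∃ s t, p = s :: t ∧ 0 < s.2) ∧ ∃ s t, p = t ++ [s] ∧ s.2 < 0}

lemma Elev.nonneg {p : List Step} (h : Elev p) : Nonneg p := by
  intro q hq
  rcases eq_or_ne q [] with rfl | hne; · simp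
  rcases eq_or_ne q p with rfl | hne'
  · rw [h.2.1]
  · have := h.2.2.2 q hq hne hne'; omega

lemma Elev.mem_WS {p : List Step} (h : Elev p) {n : ℕ} (hf : fsum p = 2 * n) : p ∈ WS n :=
  ⟨h.1, h.nonneg, hf, h.2.1⟩

/-- elevated paths end with a down step -/
lemma Elev.ends_down {p : List Step} (h : Elev p) : ∃ s t, p = t ++ [s] ∧ s.2 < 0 := by
  obtain ⟨s, t, hst, hs⟩ := h.2.2.1
  have hne : p ≠ [] := by rw [hst]; simp
  refine ⟨p.getLast hne, p.dropLast, (List.dropLast_append_getLast hne).symm, ?_⟩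
  rcases eq_or_ne p.dropLast [] with hd | hd
  · have hp1 : p = [p.getLast hne] := by
      conv_lhs => rw [← List.dropLast_append_getLast hne]
      rw [hd]; simp
    rw [hp1] at hst
    injection hst with e1 e2
    have h0 := h.2.1
    rw [hp1] at h0
    simp only [ssum_cons, ssum_nil] at h0
    rw [e1] at h0
    omega
  · have h1 : 1 ≤ ssum p.dropLast := by
      refine h.2.2.2 _ ⟨[p.getLast hne], List.dropLast_append_getLast hne⟩ hd ?_
      intro hc
      have := congrArg List.length (hc ▸ (List.dropLast_append_getLast hne))
      simp at this
    have h2 : ssum (p.dropLast ++ [p.getLast hne]) = 0 := by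
      rw [List.dropLast_append_getLast hne]; exact h.2.1
    simp only [ssum_append, ssum_cons, ssum_nil] at h2
    omega

/-- master finiteness -/
lemma finite_lists {α : Type*} {K : Set α} (hK : K.Finite) (L : ℕ) :
    {l : List α | (∀ x ∈ l, x ∈ K) ∧ l.length ≤ L}.Finite := by
  have : Finite ↥K := hK
  have h1 : {l : List ↥K | l.length ≤ L}.Finite := List.finite_length_le ↥K L
  have h2 := h1.image (fun l => l.map (Subtype.val))
  refine h2.subset ?_
  rintro l ⟨hl, hlen⟩
  refine ⟨l.pmap (fun x hx => (⟨x, hx⟩ : ↥K)) hl, by simpa using hlen, ?_⟩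
  simp [List.map_pmap]

lemma finite_fixed_fsum (n : ℕ) : {p : List Step | Steps p ∧ fsum p = 2 * n}.Finite := by
  have hK : (Set.Icc (1 : ℤ) (2 * n) ×ˢ Set.Icc (-(2 * n) : ℤ) (2 * n)).Finite :=
    (Set.finite_Icc _ _).prod (Set.finite_Icc _ _)
  refine (finite_lists hK (2 * n)).subset ?_
  rintro p ⟨hp, hf⟩
  constructor
  · intro s hs
    have h1 := step_fst_pos (hp s hs)
    -- s.1 ≤ fsum p
    obtain ⟨l1, l2, rfl⟩ := List.append_of_mem hs
    have hl1 : Steps l1 := fun x hx => hp x (by simp [hx])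
    have hl2 : Steps l2 := fun x hx => hp x (by simp [hx])
    have e1 := fsum_nonneg hl1
    have e2 := fsum_nonneg hl2
    simp only [fsum_append, fsum_cons] at hf
    have hsnd : -s.1 ≤ s.2 ∧ s.2 ≤ s.1 := by
      rcases hp s (by simp) with ⟨r, hr, h' | h'⟩ | h' <;> subst h' <;> constructor <;> simp <;> omega
    constructor
    · constructor <;> [exact h1; omega]
    · constructor <;> [omega; omega]
  · have := length_le_fsum hp
    omega

lemma WS_finite (n : ℕ) : (WS n).Finite :=
  (finite_fixed_fsum n).subset (fun p hp => ⟨hp.1, hp.2.2.1⟩)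
lemma QS_finite (n : ℕ) : (QS n).Finite := (WS_finite n).subset (fun p hp => hp.1)
lemma ES_finite (n : ℕ) : (ES n).Finite :=
  (finite_fixed_fsum n).subset (fun p hp => ⟨hp.1.1, hp.2⟩)
lemma US_finite (n : ℕ) : (US n).Finite := (WS_finite n).subset (fun p hp => hp.1)
lemma DS_finite (n : ℕ) : (DS n).Finite := (WS_finite n).subset (fun p hp => hp.1)
lemma BS_finite (n : ℕ) : (BS n).Finite := (WS_finite n).subset (fun p hp => hp.1)

end S6GF

namespace S6GF

def neg2 (s : Step) : Step := (s.1, -s.2)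
def rev (p : List Step) : List Step := (p.map neg2).reverse

@[simp] lemma rev_nil : rev [] = [] := rfl
@[simp] lemma rev_append (a b : List Step) : rev (a ++ b) = rev b ++ rev a := by
  simp [rev]
@[simp] lemma rev_cons (s : Step) (t : List Step) : rev (s :: t) = rev t ++ [neg2 s] := by
  simp [rev, neg2]
@[simp] lemma rev_rev (p : List Step) : rev (rev p) = p := by
  induction p with
  | nil => rfl
  | cons a t ih =>
    simp only [rev_cons, rev_append, rev_nil, List.nil_append, ih]
    simp [neg2]
@[simp] lemma fsum_rev (p : List Step) : fsum (rev p) = fsum p := by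
  induction p with
  | nil => rfl
  | cons a t ih => simp [ih, neg2]; try ring
@[simp] lemma ssum_rev (p : List Step) : ssum (rev p) = -ssum p := by
  induction p with
  | nil => rfl
  | cons a t ih => simp [ih, neg2]; try ring

@[simp] lemma rev_eq_nil {q : List Step} : rev q = [] ↔ q = [] := by simp [rev]

lemma neg2_mem {s : Step} (h : s ∈ S6) : neg2 s ∈ S6 := by
  rcases h with ⟨r, hr, h' | h'⟩ | h' <;> subst h'
  · exact Or.inl ⟨r, hr, Or.inr rfl⟩
  · exact Or.inl ⟨r, hr, Or.inl (by simp [neg2])⟩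
  · exact Or.inr (by simp [neg2])

lemma Steps.rev {p : List Step} (h : Steps p) : Steps (rev p) := by
  intro s hs
  simp only [S6GF.rev, List.mem_reverse, List.mem_map] at hs
  obtain ⟨a, ha, rfl⟩ := hs
  exact neg2_mem (h a ha)

lemma Nonneg.rev {p : List Step} (h : Nonneg p) (h0 : ssum p = 0) : Nonneg (S6GF.rev p) := by
  intro q hq
  obtain ⟨r, hr⟩ := hq
  have hp : p = S6GF.rev r ++ S6GF.rev q := by
    have := congrArg S6GF.rev hr
    simpa using this.symm
  have h1 : ssum p = ssum (S6GF.rev r) + ssum (S6GF.rev q) := by rw [hp]; simp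
  have h2 : 0 ≤ ssum (S6GF.rev r) := h _ ⟨S6GF.rev q, hp.symm⟩
  have h3 : ssum (S6GF.rev q) = -ssum q := ssum_rev q
  omega

lemma WS.rev {p : List Step} {n : ℕ} (h : p ∈ WS n) : rev p ∈ WS n :=
  ⟨h.1.rev, h.2.1.rev h.2.2.2, by simp [h.2.2.1], by simp [h.2.2.2]⟩

lemma Elev.rev {p : List Step} (h : Elev p) : Elev (rev p) := by
  refine ⟨h.1.rev, by simp [h.2.1], ?_, ?_⟩
  · obtain ⟨s, t, rfl, hs⟩ := h.ends_down
    exact ⟨neg2 s, S6GF.rev t, by simp, by simp [neg2]; omega⟩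
  · intro q hq hq1 hq2
    obtain ⟨r, hr⟩ := hq
    have hp : p = S6GF.rev r ++ S6GF.rev q := by
      have := congrArg S6GF.rev hr
      simpa using this.symm
    have hrne : r ≠ [] := by
      rintro rfl
      exact hq2 (by simpa using hr)
    have hrne' : S6GF.rev r ≠ [] := by simpa [rev_eq_nil] using hrne
    have hrne2 : S6GF.rev r ≠ p := by
      intro hc
      have : S6GF.rev q = [] := by
        have := hp
        rw [hc] at this
        have h2 := congrArg List.length this
        simp only [List.length_append] at h2
        exact List.eq_nil_of_length_eq_zero (by omega)
      exact hq1 (by simpa [rev_eq_nil] using this)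
    have h1 : 1 ≤ ssum (S6GF.rev r) := h.2.2.2 _ ⟨S6GF.rev q, hp.symm⟩ hrne' hrne2
    have h2 : ssum p = ssum (S6GF.rev r) + ssum (S6GF.rev q) := by rw [hp]; simp
    have h3 : ssum (S6GF.rev q) = -ssum q := ssum_rev q
    have h0 := h.2.1
    omega

end S6GF

namespace S6GF

lemma card_rev_eq {A B : Set (List Step)} (hAB : ∀ p ∈ A, rev p ∈ B)
    (hBA : ∀ p ∈ B, rev p ∈ A) : Nat.card A = Nat.card B := by
  refine Nat.card_congr ⟨fun x => ⟨rev x, hAB _ x.2⟩, fun y => ⟨rev y, hBA _ y.2⟩, ?_, ?_⟩ <;>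
    (intro x; ext1; simp)

lemma card_split (A : Set (List Step)) (B C : ℕ → Set (List Step)) (n : ℕ)
    (hB : ∀ k e, e ∈ B k → fsum e = 2 * k)
    (hC : ∀ l r, r ∈ C l → fsum r = 2 * l)
    (hfinB : ∀ k, (B k).Finite) (hfinC : ∀ k, (C k).Finite)
    (hex : ∀ p ∈ A, ∃ k l e r, k + l = n ∧ p = e ++ r ∧ e ∈ B k ∧ r ∈ C l)
    (huniq : ∀ (k l k' l' : ℕ) (e r e' r' : List Step), e ++ r = e' ++ r' →
      e ∈ B k → e' ∈ B k' → r ∈ C l → r' ∈ C l' → e = e')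
    (hmem : ∀ k l e r, k + l = n → e ∈ B k → r ∈ C l → e ++ r ∈ A) :
    Nat.card A = ∑ kl ∈ Finset.HasAntidiagonal.antidiagonal n, Nat.card (B kl.1) * Nat.card (C kl.2) := by
  classical
  letI : ∀ k, Fintype (B k) := fun k => (hfinB k).fintype
  letI : ∀ k, Fintype (C k) := fun k => (hfinC k).fintype
  set f : (Σ kl : (Finset.HasAntidiagonal.antidiagonal n : Finset (ℕ × ℕ)), (B kl.1.1 × C kl.1.2)) → A :=
    fun x => ⟨x.2.1.1 ++ x.2.2.1,
      hmem _ _ _ _ (Finset.HasAntidiagonal.mem_antidiagonal.mp x.1.2) x.2.1.2 x.2.2.2⟩ with hf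
  have hbij : Function.Bijective f := by
    constructor
    · rintro ⟨⟨⟨k, l⟩, hkl⟩, ⟨e, he⟩, ⟨r, hr⟩⟩ ⟨⟨⟨k', l'⟩, hkl'⟩, ⟨e', he'⟩, ⟨r', hr'⟩⟩ hx
      simp only [hf, Subtype.mk.injEq] at hx
      have hee : e = e' := huniq k l k' l' e r e' r' hx he he' hr hr'
      subst hee
      have hrr : r = r' := by
        have := hx
        exact List.append_cancel_left this
      subst hrr
      have hk : k = k' := by
        have h1 := hB k e he
        have h2 := hB k' e he'
        omega
      subst hk
      have hl : l = l' := by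
        have h1 := Finset.HasAntidiagonal.mem_antidiagonal.mp hkl
        have h2 := Finset.HasAntidiagonal.mem_antidiagonal.mp hkl'
        omega
      subst hl
      rfl
    · rintro ⟨p, hp⟩
      obtain ⟨k, l, e, r, hkl, rfl, he, hr⟩ := hex p hp
      exact ⟨⟨⟨(k, l), Finset.HasAntidiagonal.mem_antidiagonal.mpr hkl⟩, ⟨e, he⟩, ⟨r, hr⟩⟩, rfl⟩
  have h1 : Nat.card A = Nat.card (Σ kl : (Finset.HasAntidiagonal.antidiagonal n : Finset (ℕ × ℕ)),
      (B kl.1.1 × C kl.1.2)) := (Nat.card_congr (Equiv.ofBijective f hbij)).symm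
  rw [h1, Nat.card_eq_fintype_card, Fintype.card_sigma]
  rw [← Finset.sum_coe_sort (Finset.HasAntidiagonal.antidiagonal n)
    (fun kl => Nat.card (B kl.1) * Nat.card (C kl.2))]
  congr 1
  ext kl
  rw [Fintype.card_prod, Nat.card_eq_fintype_card, Nat.card_eq_fintype_card]

end S6GF

namespace S6GF

lemma prefix_append_cases {α : Type*} {q e r : List α} (h : q <+: e ++ r) :
    q <+: e ∨ ∃ q', q = e ++ q' ∧ q' <+: r := by
  rcases le_or_gt q.length e.length with hle | hlt
  · left
    have h1 : q = (e ++ r).take q.length := List.prefix_iff_eq_take.mp h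
    rw [List.take_append_of_le_length hle] at h1
    exact h1 ▸ List.take_prefix _ _
  · right
    have he : e <+: q := by
      rcases List.prefix_or_prefix_of_prefix (List.prefix_append e r) h with h' | h'
      · exact h'
      · exact absurd h'.length_le (by omega)
    obtain ⟨q', rfl⟩ := he
    exact ⟨q', rfl, (List.prefix_append_right_inj e).mp h⟩

/-- uniqueness of the first-return factor -/
lemma elev_unique {e r e' r' : List Step} (h : e ++ r = e' ++ r')
    (he : Elev e) (he' : Elev e') : e = e' := by
  have h1 : e <+: e' ++ r' := h ▸ List.prefix_append e r
  have key : ∀ (a b : List Step) (x y : List Step), a ++ x = b ++ y → Elev a → Elev b →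
      a <+: b → a = b := by
    intro a b x y hxy ha hb hab
    by_contra hne
    have hane : a ≠ [] := by
      obtain ⟨s, t, rfl, _⟩ := ha.2.2.1
      simp
    have := hb.2.2.2 a hab hane hne
    rw [ha.2.1] at this
    omega
  rcases List.prefix_or_prefix_of_prefix (List.prefix_append e r) (h ▸ List.prefix_append e' r') with h' | h'
  · exact key e e' r r' h he he' h'
  · exact (key e' e r' r h.symm he' he h').symm

/-- first-return decomposition existence -/
lemma first_return {p : List Step} (hp : Steps p) (hnn : Nonneg p) (h0 : ssum p = 0)
    (hup : ∃ s t, p = s :: t ∧ 0 < s.2) :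
    ∃ e r, p = e ++ r ∧ Elev e ∧ Steps r ∧ Nonneg r ∧ ssum r = 0 := by
  obtain ⟨s, t, hst, hs⟩ := hup
  have hne : p ≠ [] := by rw [hst]; simp
  have hex : ∃ k, 0 < k ∧ ssum (p.take k) = 0 := by
    refine ⟨p.length, ?_, by simpa using h0⟩
    rw [hst]; simp
  classical
  obtain ⟨k0, hk0spec, hk0min⟩ : ∃ k, (0 < k ∧ ssum (p.take k) = 0) ∧
      ∀ m < k, ¬(0 < m ∧ ssum (p.take m) = 0) :=
    ⟨Nat.find hex, Nat.find_spec hex, fun m hm => Nat.find_min hex hm⟩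
  obtain ⟨hk0pos, hk0sum⟩ := hk0spec
  set e := p.take k0 with hedef
  set r := p.drop k0 with hrdef
  have hk0le : k0 ≤ p.length := by
    by_contra hgt
    push_neg at hgt
    have : p.take k0 = p := List.take_of_length_le (le_of_lt hgt)
    have h2 : ssum (p.take p.length) = 0 := by simpa using h0
    exact hk0min p.length hgt ⟨by rw [hst]; simp, h2⟩
  have hsplit : p = e ++ r := (List.take_append_drop k0 p).symm
  have hepre : e <+: p := List.take_prefix _ _
  have helen : e.length = k0 := by
    rw [hedef, List.length_take]
    omega
  have hene : e ≠ [] := by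
    intro hc
    rw [hc] at helen
    simp at helen
    omega
  have hse : Steps e := fun x hx => hp x (hepre.subset hx)
  have hsr : Steps r := fun x hx => hp x (List.mem_of_mem_drop hx)
  have hsumr : ssum r = 0 := by
    have : ssum p = ssum e + ssum r := by rw [hsplit]; simp
    omega
  refine ⟨e, r, hsplit, ⟨hse, hk0sum, ?_, ?_⟩, hsr, ?_, hsumr⟩
  · -- head of e
    refine ⟨s, t.take (k0 - 1), ?_, hs⟩
    rw [hedef, hst]
    cases k0 with
    | zero => omega
    | succ m => simp
  · -- interior
    intro q hq hq1 hq2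
    have hqp : q <+: p := hq.trans hepre
    have hq0 : 0 ≤ ssum q := hnn q hqp
    rcases eq_or_lt_of_le hq0 with heq | hlt
    · exfalso
      have hqlen : q.length < k0 := by
        have h1 : q.length ≤ e.length := List.IsPrefix.length_le hq
        rcases eq_or_lt_of_le h1 with he1 | he1
        · exfalso
          apply hq2
          have := List.prefix_iff_eq_take.mp hq
          rw [this, he1, List.take_length]
        · omega
      have hqpos : 0 < q.length := by
        cases q with
        | nil => exact absurd rfl hq1
        | cons a b => simp
      have : q = p.take q.length := List.prefix_iff_eq_take.mp hqp
      exact hk0min q.length hqlen ⟨hqpos, by rw [← this]; omega⟩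
    · exact hlt
  · -- Nonneg r
    intro q hq
    have : e ++ q <+: p := by
      rw [hsplit]
      exact (List.prefix_append_right_inj e).mpr hq
    have h1 := hnn _ this
    have h2 : ssum (e ++ q) = ssum e + ssum q := by simp
    rw [hk0sum] at *
    omega

/-- appending an elevated path to a W path -/
lemma elev_append_WS {e r : List Step} (he : Elev e) {k l : ℕ} (hf : fsum e = 2 * k)
    (hr : r ∈ WS l) : e ++ r ∈ WS (k + l) := by
  refine ⟨?_, ?_, ?_, ?_⟩
  · intro x hx
    rcases List.mem_append.mp hx with h | h
    · exact he.1 x h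
    · exact hr.1 x h
  · intro q hq
    rcases prefix_append_cases hq with h | ⟨q', rfl, hq'⟩
    · exact he.nonneg q h
    · have h1 := hr.2.1 q' hq'
      have : ssum (e ++ q') = ssum e + ssum q' := by simp
      rw [he.2.1] at this
      omega
  · simp [hf, hr.2.2.1]; push_cast; ring
  · simp [he.2.1, hr.2.2.2]

/-- appending preserves NoFlatOnAxis -/
lemma elev_append_noflat {e r : List Step} (he : Elev e) (hr : NoFlatOnAxis r) :
    NoFlatOnAxis (e ++ r) := by
  intro q x hq hx
  rcases prefix_append_cases hq with h | ⟨q', hqq, hq'⟩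
  · -- q ++ [x] inside e
    rcases eq_or_ne (q ++ [x]) e with heq | hne
    · -- impossible: e ends with a down step
      obtain ⟨u, t, hut, hu⟩ := he.ends_down
      rw [hut] at heq
      have := (List.concat_inj.mp (by simpa [List.concat_eq_append] using heq)).2
      rw [this] at hx
      omega
    · have h1 := he.2.2.2 (q ++ [x]) h (by simp) hne
      have : ssum (q ++ [x]) = ssum q + x.2 := by simp
      intro hc
      have hc' : ssum q = 0 := hc
      omega
  · -- q ++ [x] = e ++ q', so q' ends with x
    have hq'ne : q' ≠ [] := by
      rintro rfl
      -- then q ++ [x] = e, but e ends with down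
      obtain ⟨u, t, hut, hu⟩ := he.ends_down
      rw [List.append_nil] at hqq
      rw [hut] at hqq
      have := (List.concat_inj.mp (by simpa [List.concat_eq_append] using hqq)).2
      rw [this] at hx
      omega
    -- write q' = q'' ++ [x]
    obtain ⟨q'', hq''⟩ : ∃ q'', q' = q'' ++ [x] := by
      refine ⟨q'.dropLast, ?_⟩
      have hl : q'.getLast hq'ne = x := by
        have h1 : (q ++ [x]).getLast? = some x := List.getLast?_concat
        have h2 : (e ++ q').getLast? = q'.getLast? :=
          List.getLast?_append_of_ne_nil (l₁ := e) hq'ne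
        rw [hqq, h2, List.getLast?_eq_getLast hq'ne] at h1
        exact Option.some_injective _ h1
      conv_lhs => rw [← List.dropLast_append_getLast hq'ne, hl]
    have hqeq : q = e ++ q'' := by
      have : q ++ [x] = (e ++ q'') ++ [x] := by
        rw [hqq, hq'']; simp
      exact List.concat_inj.mp (by simpa [List.concat_eq_append] using this) |>.1
    have h1 : ssum q'' ≠ 0 := hr q'' x (by rw [← hq'']; exact hq') hx
    show ssum q ≠ 0
    rw [hqeq]
    have h2 : ssum (e ++ q'') = ssum e + ssum q'' := by simp
    have h3 := he.2.1
    omega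

end S6GF

namespace S6GF

lemma prefix_cons {α : Type*} {s : α} {l q : List α} (h : q <+: s :: l) (h1 : q ≠ []) :
    ∃ q', q = s :: q' ∧ q' <+: l := by
  cases q with
  | nil => exact absurd rfl h1
  | cons a t =>
    rw [List.cons_prefix_cons] at h
    exact ⟨t, by rw [h.1], h.2⟩

lemma prefix_singleton {α : Type*} {s : α} {q : List α} (h : q <+: [s]) :
    q = [] ∨ q = [s] := by
  cases q with
  | nil => exact Or.inl rfl
  | cons a t =>
    rw [List.cons_prefix_cons] at h
    right
    rw [h.1, List.prefix_nil.mp h.2]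

/-- structure of prefixes of s :: m ++ [s'] -/
lemma prefix_cons_append {s s' : Step} {m q : List Step}
    (h : q <+: s :: (m ++ [s'])) (h1 : q ≠ []) (h2 : q ≠ s :: (m ++ [s'])) :
    ∃ q', q = s :: q' ∧ q' <+: m := by
  obtain ⟨q', rfl, hq'⟩ := prefix_cons h h1
  rcases prefix_append_cases hq' with h' | ⟨q'', rfl, hq''⟩
  · exact ⟨q', rfl, h'⟩
  · rcases prefix_singleton hq'' with rfl | rfl
    · exact ⟨m, by simp, List.prefix_refl m⟩
    · exact absurd rfl h2

/-- constructor for elevated paths of the form s :: m ++ [s'] -/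
lemma elev_cons_append {s s' : Step} {m : List Step} (hs : s ∈ S6) (hs' : s' ∈ S6)
    (hm : Steps m) (h2 : 0 < s.2) (hsum : s.2 + ssum m + s'.2 = 0)
    (hint : ∀ q', q' <+: m → 1 ≤ s.2 + ssum q') :
    Elev (s :: (m ++ [s'])) := by
  refine ⟨?_, ?_, ⟨s, m ++ [s'], rfl, h2⟩, ?_⟩
  · intro x hx
    rcases List.mem_cons.mp hx with rfl | hx'
    · exact hs
    · rcases List.mem_append.mp hx' with h | h
      · exact hm x h
      · rw [List.mem_singleton.mp h]; exact hs'
  · simp; omega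
  · intro q hq hq1 hq2
    obtain ⟨q', rfl, hq'⟩ := prefix_cons_append hq hq1 hq2
    have := hint q' hq'
    simp only [ssum_cons]
    omega

/-- destructor for elevated paths -/
lemma elev_structure {p : List Step} (hp : Elev p) :
    ∃ s m s', p = s :: (m ++ [s']) ∧ 0 < s.2 ∧ s.1 = s.2 ∧ s'.2 < 0 ∧ s'.1 = -s'.2 ∧
      Steps m ∧ s.2 + ssum m + s'.2 = 0 ∧ ∀ q', q' <+: m → 1 ≤ s.2 + ssum q' := by
  obtain ⟨s, t, rfl, hs⟩ := hp.2.2.1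
  obtain ⟨s', t', hst', hs'⟩ := hp.ends_down
  have hsS := hp.1 s (by simp)
  have hs'S := hp.1 s' (by rw [hst']; simp)
  have htne : t ≠ [] := by
    rintro rfl
    have : s = s' := by
      have h1 : ([s] : List Step).getLast? = some s := rfl
      rw [hst', List.getLast?_concat] at h1
      exact (Option.some_injective _ h1).symm
    rw [this] at hs
    omega
  refine ⟨s, t.dropLast, t.getLast htne, ?_, hs, (step_snd_pos hsS hs).1 ▸ rfl, ?_, ?_, ?_, ?_, ?_⟩
  · rw [List.dropLast_append_getLast htne]
  · -- getLast t = s', so snd < 0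
    have h1 : (s :: t).getLast? = some (t.getLast htne) := by
      rw [List.getLast?_eq_getLast (l := s :: t) (by simp), List.getLast_cons htne]
    rw [hst', List.getLast?_concat] at h1
    rw [← Option.some_injective _ h1]
    exact hs'
  · have h1 : (s :: t).getLast? = some (t.getLast htne) := by
      rw [List.getLast?_eq_getLast (l := s :: t) (by simp), List.getLast_cons htne]
    rw [hst', List.getLast?_concat] at h1
    rw [← Option.some_injective _ h1]
    exact (step_snd_neg hs'S hs').1 ▸ rfl
  · intro x hx
    exact hp.1 x (by simp [List.mem_of_mem_dropLast hx])
  · have h0 := hp.2.1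
    conv_lhs at h0 => rw [show s :: t = s :: (t.dropLast ++ [t.getLast htne]) by
      rw [List.dropLast_append_getLast htne]]
    simp only [ssum_cons, ssum_append] at h0
    simp only [ssum_cons, ssum_nil] at h0
    omega
  · intro q' hq'
    have hpre : s :: q' <+: s :: t := by
      rw [List.cons_prefix_cons]
      exact ⟨rfl, hq'.trans (List.dropLast_prefix t)⟩
    have hne1 : (s :: q') ≠ [] := by simp
    have hne2 : (s :: q') ≠ s :: t := by
      intro hc
      have hlen := congrArg List.length hc
      have hlen2 := List.IsPrefix.length_le hq'
      have : t.dropLast.length = t.length - 1 := List.length_dropLast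
      have htpos : 0 < t.length := List.length_pos_iff.mpr htne
      simp only [List.length_cons] at hlen
      omega
    have := hp.2.2.2 (s :: q') hpre hne1 hne2
    simp only [ssum_cons] at this
    omega

/-- destructor for BS paths -/
lemma bs_structure {p : List Step} {n : ℕ} (hp : p ∈ BS n) :
    ∃ s m s', p = s :: (m ++ [s']) ∧ 0 < s.2 ∧ s.1 = s.2 ∧ s'.2 < 0 ∧ s'.1 = -s'.2 ∧
      Steps m ∧ s.2 + ssum m + s'.2 = 0 ∧ (∀ q', q' <+: m → 0 ≤ s.2 + ssum q') ∧
      fsum p = 2 * n := by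
  obtain ⟨hW, ⟨s, t, rfl, hs⟩, ⟨s', t', hst', hs'⟩⟩ := hp
  have hsS := hW.1 s (by simp)
  have hs'S := hW.1 s' (by rw [hst']; simp)
  have htne : t ≠ [] := by
    rintro rfl
    have : s = s' := by
      have h1 : ([s] : List Step).getLast? = some s := rfl
      rw [hst', List.getLast?_concat] at h1
      exact (Option.some_injective _ h1).symm
    rw [this] at hs
    omega
  have hlast : t.getLast htne = s' := by
    have h1 : (s :: t).getLast? = some (t.getLast htne) := by
      rw [List.getLast?_eq_getLast (l := s :: t) (by simp), List.getLast_cons htne]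
    rw [hst', List.getLast?_concat] at h1
    exact (Option.some_injective _ h1).symm
  refine ⟨s, t.dropLast, t.getLast htne, ?_, hs, (step_snd_pos hsS hs).1 ▸ rfl, ?_, ?_, ?_, ?_, ?_, ?_⟩
  · rw [List.dropLast_append_getLast htne]
  · rw [hlast]; exact hs'
  · rw [hlast]; exact (step_snd_neg hs'S hs').1 ▸ rfl
  · intro x hx
    exact hW.1 x (by simp [List.mem_of_mem_dropLast hx])
  · have h0 := hW.2.2.2
    conv_lhs at h0 => rw [show s :: t = s :: (t.dropLast ++ [t.getLast htne]) by
      rw [List.dropLast_append_getLast htne]]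
    simp only [ssum_cons, ssum_append, ssum_nil] at h0
    omega
  · intro q' hq'
    have hpre : s :: q' <+: s :: t := by
      rw [List.cons_prefix_cons]
      exact ⟨rfl, hq'.trans (List.dropLast_prefix t)⟩
    have := hW.2.1 (s :: q') hpre
    simp only [ssum_cons] at this
    omega
  · exact hW.2.2.1

/-- splitting a finite set count by a predicate -/
lemma card_split_pred (S : Set (List Step)) (hS : S.Finite) (P : List Step → Prop) :
    Nat.card S = Nat.card {p | p ∈ S ∧ P p} + Nat.card {p | p ∈ S ∧ ¬ P p} := by
  classical
  rw [Nat.card_coe_set_eq, Nat.card_coe_set_eq, Nat.card_coe_set_eq]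
  rw [← Set.ncard_union_eq (by rw [Set.disjoint_left]; rintro p ⟨_, h1⟩ ⟨_, h2⟩; exact h2 h1)
    (hS.subset (fun p hp => hp.1)) (hS.subset (fun p hp => hp.1))]
  congr 1
  ext p
  by_cases h : P p <;> simp [h]
  
end S6GF

namespace S6GF

noncomputable def cw (n : ℕ) : ℕ := Nat.card (WS n)
noncomputable def cu (n : ℕ) : ℕ := Nat.card (US n)
noncomputable def cd (n : ℕ) : ℕ := Nat.card (DS n)
noncomputable def cb (n : ℕ) : ℕ := Nat.card (BS n)
noncomputable def ce (n : ℕ) : ℕ := Nat.card (ES n)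
noncomputable def cq (n : ℕ) : ℕ := Nat.card (QS n)

lemma nil_mem_WS : [] ∈ WS 0 := by
  refine ⟨fun s hs => absurd hs (by simp), fun q hq => ?_, by simp, by simp⟩
  rw [List.prefix_nil.mp hq]
  simp

lemma WS_zero : WS 0 = {[]} := by
  ext p
  constructor
  · intro hp
    exact eq_nil_of_fsum_eq_zero hp.1 (by simpa using hp.2.2.1)
  · rintro rfl
    exact nil_mem_WS

lemma QS_zero : QS 0 = {[]} := by
  ext p
  constructor
  · intro hp
    exact eq_nil_of_fsum_eq_zero hp.1.1 (by simpa using hp.1.2.2.1)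
  · rintro rfl
    refine ⟨nil_mem_WS, fun q s hq hs => ?_⟩
    exfalso
    have := List.prefix_nil.mp hq
    simp at this

lemma cw_zero : cw 0 = 1 := by
  rw [cw, WS_zero, Nat.card_coe_set_eq, Set.ncard_singleton]
lemma cq_zero : cq 0 = 1 := by
  rw [cq, QS_zero, Nat.card_coe_set_eq, Set.ncard_singleton]
lemma ce_zero : ce 0 = 0 := by
  have : ES 0 = ∅ := by
    ext p
    simp only [Set.mem_empty_iff_false, iff_false]
    intro hp
    have h1 := eq_nil_of_fsum_eq_zero hp.1.1 (by simpa using hp.2)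
    obtain ⟨s, t, rfl, _⟩ := hp.1.2.2.1
    simp at h1
  rw [ce, this]
  simp

lemma ES_fsum {k : ℕ} {p : List Step} (hp : p ∈ ES k) : fsum p = 2 * k := hp.2
lemma WS_fsum {k : ℕ} {p : List Step} (hp : p ∈ WS k) : fsum p = 2 * k := hp.2.2.1
lemma QS_fsum {k : ℕ} {p : List Step} (hp : p ∈ QS k) : fsum p = 2 * k := hp.1.2.2.1

/-- first-return decomposition core -/
lemma hex_core {p : List Step} {n : ℕ} (hp : p ∈ WS n)
    (hup : ∃ s t, p = s :: t ∧ 0 < s.2) :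
    ∃ k l e r, k + l = n ∧ p = e ++ r ∧ e ∈ ES k ∧ r ∈ WS l ∧
      (NoFlatOnAxis p → NoFlatOnAxis r) := by
  obtain ⟨e, r, hsplit, hElev, hStepsR, hNonnegR, hsum0⟩ :=
    first_return hp.1 hp.2.1 hp.2.2.2 hup
  obtain ⟨k, hk⟩ := fsum_even hElev.1 hElev.2.1
  have hfr : fsum e + fsum r = 2 * n := by
    rw [← fsum_append, ← hsplit]; exact hp.2.2.1
  have hrpos := fsum_nonneg hStepsR
  have hkn : k ≤ n := by omega
  refine ⟨k, n - k, e, r, by omega, hsplit, ⟨hElev, hk⟩, ⟨hStepsR, hNonnegR, ?_, hsum0⟩, ?_⟩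
  · push_cast
    omega
  · intro hNF q s hq hs
    have hq2 : (e ++ q) ++ [s] <+: p := by
      rw [hsplit, List.append_assoc]
      exact (List.prefix_append_right_inj e).mpr hq
    have := hNF (e ++ q) s hq2 hs
    show ssum q ≠ 0
    intro hc
    apply this
    show ssum (e ++ q) = 0
    rw [ssum_append, hElev.2.1, hc]
    ring

lemma cu_eq (n : ℕ) :
    cu n = ∑ kl ∈ Finset.HasAntidiagonal.antidiagonal n, ce kl.1 * cw kl.2 := by
  apply card_split (US n) ES WS n (fun k e he => ES_fsum he) (fun l r hr => WS_fsum hr)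
    ES_finite WS_finite
  · intro p hp
    obtain ⟨k, l, e, r, h1, h2, h3, h4, _⟩ := hex_core hp.1 hp.2
    exact ⟨k, l, e, r, h1, h2, h3, h4⟩
  · intro k l k' l' e r e' r' h he he' _ _
    exact elev_unique h he.1 he'.1
  · rintro k l e r rfl he hr
    refine ⟨elev_append_WS he.1 he.2 hr, ?_⟩
    obtain ⟨s, t, rfl, hs⟩ := he.1.2.2.1
    exact ⟨s, t ++ r, by simp, hs⟩

lemma cq_eq (n : ℕ) (hn : n ≠ 0) :
    cq n = ∑ kl ∈ Finset.HasAntidiagonal.antidiagonal n, ce kl.1 * cq kl.2 := by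
  apply card_split (QS n) ES QS n (fun k e he => ES_fsum he) (fun l r hr => QS_fsum hr)
    ES_finite QS_finite
  · intro p hp
    have hpne : p ≠ [] := by
      rintro rfl
      have := hp.1.2.2.1
      simp at this
      omega
    obtain ⟨s, t, hst⟩ : ∃ s t, p = s :: t := by
      cases p with
      | nil => exact absurd rfl hpne
      | cons a b => exact ⟨a, b, rfl⟩
    have hs0 : 0 ≤ s.2 := by
      have := hp.1.2.1 [s] (by rw [hst]; exact ⟨t, rfl⟩)
      simpa using this
    have hsne : s.2 ≠ 0 := by
      intro hc
      exact hp.2 [] s (by rw [hst]; exact ⟨t, rfl⟩) hc (by simp [ssum])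
    obtain ⟨k, l, e, r, h1, h2, h3, h4, h5⟩ := hex_core hp.1 ⟨s, t, hst, by omega⟩
    exact ⟨k, l, e, r, h1, h2, h3, ⟨h4, h5 hp.2⟩⟩
  · intro k l k' l' e r e' r' h he he' _ _
    exact elev_unique h he.1 he'.1
  · rintro k l e r rfl he hr
    exact ⟨elev_append_WS he.1 he.2 hr.1, elev_append_noflat he.1 hr.2⟩

/-- the "empty or ends down" sets -/
def CS (l : ℕ) : Set (List Step) :=
  {r | r ∈ WS l ∧ (r = [] ∨ ∃ s t, r = t ++ [s] ∧ s.2 < 0)}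
noncomputable def cc (l : ℕ) : ℕ := Nat.card (CS l)

lemma CS_finite (l : ℕ) : (CS l).Finite := (WS_finite l).subset (fun p hp => hp.1)

lemma cc_zero : cc 0 = 1 := by
  have : CS 0 = {[]} := by
    ext p
    constructor
    · intro hp
      exact eq_nil_of_fsum_eq_zero hp.1.1 (by simpa using hp.1.2.2.1)
    · rintro rfl
      exact ⟨nil_mem_WS, Or.inl rfl⟩
  rw [cc, this, Nat.card_coe_set_eq, Set.ncard_singleton]

lemma cc_eq_cd (l : ℕ) (hl : l ≠ 0) : cc l = cd l := by
  have : CS l = DS l := by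
    ext p
    constructor
    · rintro ⟨h1, rfl | h2⟩
      · exfalso
        have := h1.2.2.1
        simp at this
        omega
      · obtain ⟨s, t, rfl, hs⟩ := h2
        exact ⟨h1, s, t, rfl, hs⟩
    · rintro ⟨h1, s, t, rfl, hs⟩
      exact ⟨h1, Or.inr ⟨s, t, rfl, hs⟩⟩
  rw [cc, this, cd]

lemma cb_eq (n : ℕ) :
    cb n = ∑ kl ∈ Finset.HasAntidiagonal.antidiagonal n, ce kl.1 * cc kl.2 := by
  apply card_split (BS n) ES CS n (fun k e he => ES_fsum he) (fun l r hr => WS_fsum hr.1)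
    ES_finite CS_finite
  · intro p hp
    obtain ⟨k, l, e, r, h1, h2, h3, h4, _⟩ := hex_core hp.1 hp.2.1
    refine ⟨k, l, e, r, h1, h2, h3, h4, ?_⟩
    rcases eq_or_ne r [] with rfl | hrne
    · exact Or.inl rfl
    · right
      obtain ⟨s, t', hst', hs⟩ := hp.2.2
      refine ⟨s, r.dropLast, ?_, hs⟩
      have h5 : r.getLast hrne = s := by
        have hg1 : p.getLast? = some s := by rw [hst']; exact List.getLast?_concat
        have hg2 : p.getLast? = some (r.getLast hrne) := by
          rw [h2, List.getLast?_append_of_ne_nil (l₁ := e) hrne,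
            List.getLast?_eq_getLast hrne]
        rw [hg1] at hg2
        exact (Option.some_injective _ hg2).symm
      rw [← h5, List.dropLast_append_getLast hrne]
  · intro k l k' l' e r e' r' h he he' _ _
    exact elev_unique h he.1 he'.1
  · rintro k l e r rfl he hr
    refine ⟨elev_append_WS he.1 he.2 hr.1, ?_, ?_⟩
    · obtain ⟨s, t, rfl, hs⟩ := he.1.2.2.1
      exact ⟨s, t ++ r, by simp, hs⟩
    · rcases hr.2 with rfl | ⟨s, t, rfl, hs⟩
      · obtain ⟨s, t, het, hs⟩ := he.1.ends_down
        exact ⟨s, t, by rw [List.append_nil, het], hs⟩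
      · exact ⟨s, e ++ t, by simp, hs⟩

lemma cd_eq_cu (n : ℕ) : cd n = cu n := by
  apply card_rev_eq
  · rintro p ⟨h1, s, t, rfl, hs⟩
    refine ⟨WS.rev h1, neg2 s, rev t, by simp, ?_⟩
    simp [neg2]
    omega
  · rintro p ⟨h1, s, t, rfl, hs⟩
    refine ⟨WS.rev h1, neg2 s, rev t, by simp, ?_⟩
    simp [neg2]
    omega

/-- W splitting: n ≥ 1 -/
lemma cw_eq (n : ℕ) (hn : n ≠ 0) : cw n = cw (n - 1) + cu n := by
  have hsplit := card_split_pred (WS n) (WS_finite n) (fun p => ∃ s t, p = s :: t ∧ 0 < s.2)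
  have h1 : {p | p ∈ WS n ∧ ∃ s t, p = s :: t ∧ 0 < s.2} = US n := rfl
  have h2 : Nat.card {p | p ∈ WS n ∧ ¬∃ s t, p = s :: t ∧ 0 < s.2} = cw (n - 1) := by
    -- these are exactly the paths starting with a flat step
    have heq : {p | p ∈ WS n ∧ ¬∃ s t, p = s :: t ∧ 0 < s.2} =
        {p | ∃ t, p = ((2 : ℤ), (0 : ℤ)) :: t ∧ t ∈ WS (n - 1)} := by
      ext p
      constructor
      · rintro ⟨hp, hno⟩
        have hpne : p ≠ [] := by
          rintro rfl
          have := hp.2.2.1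
          simp at this
          omega
        obtain ⟨s, t, rfl⟩ : ∃ s t, p = s :: t := by
          cases p with
          | nil => exact absurd rfl hpne
          | cons a b => exact ⟨a, b, rfl⟩
        have hs0 : 0 ≤ s.2 := by
          have := hp.2.1 [s] ⟨t, rfl⟩
          simpa using this
        have hsne : s.2 = 0 := by
          by_contra hc
          exact hno ⟨s, t, rfl, by omega⟩
        have hflat := step_snd_eq_zero (hp.1 s (by simp)) hsne
        subst hflat
        refine ⟨t, rfl, ?_, ?_, ?_, ?_⟩
        · exact fun x hx => hp.1 x (by simp [hx])
        · intro q hq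
          have h3 := hp.2.1 (((2 : ℤ), (0 : ℤ)) :: q) (by rw [List.cons_prefix_cons]; exact ⟨rfl, hq⟩)
          simpa using h3
        · have h3 := hp.2.2.1
          simp only [fsum_cons] at h3
          push_cast
          omega
        · have h3 := hp.2.2.2
          simpa using h3
      · rintro ⟨t, rfl, ht⟩
        constructor
        · refine ⟨?_, ?_, ?_, ?_⟩
          · intro x hx
            rcases List.mem_cons.mp hx with rfl | hx'
            · exact flat_mem
            · exact ht.1 x hx'
          · intro q hq
            rcases eq_or_ne q [] with rfl | hqne
            · simp
            · obtain ⟨q', rfl, hq'⟩ := prefix_cons hq hqne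
              have := ht.2.1 q' hq'
              simpa using this
          · have := ht.2.2.1
            simp only [fsum_cons]
            push_cast at this ⊢
            omega
          · have := ht.2.2.2
            simpa using this
        · rintro ⟨s, t', heq, hs⟩
          rw [List.cons.injEq] at heq
          rw [← heq.1] at hs
          simp at hs
      
    rw [heq]
    apply Nat.card_congr
    refine ⟨fun x => ⟨x.1.tail, ?_⟩, fun y => ⟨((2 : ℤ), (0 : ℤ)) :: y.1, ⟨y.1, rfl, y.2⟩⟩, ?_, ?_⟩
    · obtain ⟨t, ht, htW⟩ := x.2
      rw [ht]
      exact htW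
    · rintro ⟨p, t, rfl, ht⟩
      rfl
    · rintro ⟨p, hp⟩
      rfl
  rw [cw, hsplit, h1, h2, Nat.add_comm]
  rfl

end S6GF

namespace S6GF

def P1 (p : List Step) : Prop := ∃ t, p = ((1 : ℤ), (1 : ℤ)) :: t
def L1 (p : List Step) : Prop := ∃ t, p = t ++ [((1 : ℤ), (-1 : ℤ))]

lemma one_mem : ((1 : ℤ), (1 : ℤ)) ∈ S6 := up_mem one_pos
lemma onedown_mem : ((1 : ℤ), (-1 : ℤ)) ∈ S6 := by
  have := down_mem (r := 1) one_pos
  simpa using this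

/-- from L1 and a concat form, identify the last element -/
lemma last_of_L1 {p : List Step} {s' : Step} {m : List Step}
    (hp : p = s' :: m) : True := trivial

lemma last_eq_of_concat_eq {a b : List Step} {x y : Step} (h : a ++ [x] = b ++ [y]) :
    a = b ∧ x = y :=
  List.concat_inj.mp (by simpa [List.concat_eq_append] using h)

/-- identify last element from L1 -/
lemma L1_last {s : Step} {m : List Step} {s' : Step}
    (hL : L1 (s :: (m ++ [s']))) : s' = ((1 : ℤ), (-1 : ℤ)) := by
  obtain ⟨t, ht⟩ := hL
  have h2 : (s :: m) ++ [s'] = t ++ [((1 : ℤ), (-1 : ℤ))] := by simpa using ht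
  exact (last_eq_of_concat_eq h2).2

lemma not_L1_of_last {s : Step} {m : List Step} {s' : Step}
    (h : s' ≠ ((1 : ℤ), (-1 : ℤ))) : ¬ L1 (s :: (m ++ [s'])) := fun hL => h (L1_last hL)

/-- (FF) case: card = cw n -/
lemma cardFF (n : ℕ) :
    Nat.card {p | (p ∈ ES (n + 1) ∧ P1 p) ∧ L1 p} = cw n := by
  symm
  apply Nat.card_congr
  refine Equiv.ofBijective
    (fun w => ⟨((1 : ℤ), (1 : ℤ)) :: (w.1 ++ [((1 : ℤ), (-1 : ℤ))]), ?_⟩) ⟨?_, ?_⟩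
  · obtain ⟨w, hw⟩ := w
    refine ⟨⟨⟨?_, ?_⟩, ⟨w ++ [((1 : ℤ), (-1 : ℤ))], rfl⟩⟩,
      ⟨((1 : ℤ), (1 : ℤ)) :: w, by simp⟩⟩
    · refine elev_cons_append one_mem onedown_mem hw.1 (by norm_num) ?_ ?_
      · have := hw.2.2.2; simp; omega
      · intro q' hq'
        have := hw.2.1 q' hq'
        simp; omega
    · have := hw.2.2.1
      simp only [fsum_cons, fsum_append, fsum_cons, fsum_nil]
      push_cast
      omega
  · rintro ⟨w1, hw1⟩ ⟨w2, hw2⟩ hval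
    simp only [Subtype.mk.injEq, List.cons.injEq, true_and] at hval
    exact Subtype.ext (last_eq_of_concat_eq hval).1
  · rintro ⟨y, ⟨hE, hP⟩, hL⟩
    obtain ⟨s, m, s', hy, hs2, hs12, hs'2, hs'12, hmS, hsum, hint⟩ := elev_structure hE.1
    have hsval : s = ((1 : ℤ), (1 : ℤ)) := by
      obtain ⟨t, ht⟩ := hP
      rw [hy] at ht
      exact (List.cons.injEq _ _ _ _ ▸ ht).1
    have hs'val : s' = ((1 : ℤ), (-1 : ℤ)) := L1_last (hy ▸ hL)
    refine ⟨⟨m, ?_, ?_, ?_, ?_⟩, ?_⟩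
    · exact hmS
    · intro q' hq'
      have := hint q' hq'
      rw [hsval] at this
      simp at this
      omega
    · have hf : fsum y = 2 * (n + 1 : ℕ) := hE.2
      rw [hy, hsval, hs'val] at hf
      simp only [fsum_cons, fsum_append, fsum_nil] at hf
      push_cast at hf ⊢
      omega
    · rw [hsval, hs'val] at hsum
      simp at hsum
      omega
    · apply Subtype.ext
      simp only
      rw [hy, hsval, hs'val]

/-- (TF) case: card = cu n -/
lemma cardTF (n : ℕ) :
    Nat.card {p | (p ∈ ES (n + 1) ∧ ¬ P1 p) ∧ L1 p} = cu n := by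
  symm
  apply Nat.card_congr
  refine Equiv.ofBijective (fun w =>
    ⟨((w.1.headI).1 + 1, (w.1.headI).2 + 1) :: (w.1.tail ++ [((1 : ℤ), (-1 : ℤ))]), ?_⟩)
    ⟨?_, ?_⟩
  · obtain ⟨w, hw, s, t, rfl, hs⟩ := w
    have hsS := hw.1 s (by simp)
    have hs12 : s.1 = s.2 := by
      have := (step_snd_pos hsS hs).1
      rw [this]
    simp only [List.headI, List.tail]
    have hhead : ((s.1 + 1 : ℤ), (s.2 + 1 : ℤ)) ∈ S6 := by
      have : ((s.1 + 1 : ℤ), (s.2 + 1 : ℤ)) = ((s.2 + 1 : ℤ), (s.2 + 1 : ℤ)) := by rw [hs12]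
      rw [this]
      exact up_mem (by omega)
    refine ⟨⟨⟨?_, ?_⟩, ?_⟩, ⟨((s.1 + 1 : ℤ), (s.2 + 1 : ℤ)) :: t, by simp⟩⟩
    · refine elev_cons_append hhead onedown_mem (fun x hx => hw.1 x (by simp [hx]))
        (by simp; omega) ?_ ?_
      · have := hw.2.2.2
        simp only [ssum_cons] at this
        simp
        omega
      · intro q' hq'
        have := hw.2.1 (s :: q') (by rw [List.cons_prefix_cons]; exact ⟨rfl, hq'⟩)
        simp only [ssum_cons] at this
        simp
        omega
    · have := hw.2.2.1
      simp only [fsum_cons] at this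
      simp only [fsum_cons, fsum_append, fsum_cons, fsum_nil]
      push_cast at this ⊢
      omega
    · rintro ⟨t', ht'⟩
      have := (List.cons.injEq _ _ _ _ ▸ ht').1
      have h2 : s.2 + 1 = 1 := by
        have := congrArg Prod.snd this
        simpa using this
      omega
  · rintro ⟨w1, hw1, s1, t1, hv1, hs1⟩ ⟨w2, hw2, s2, t2, hv2, hs2⟩ hval
    subst hv1; subst hv2
    simp only [Subtype.mk.injEq, List.headI, List.tail, List.cons.injEq, Prod.mk.injEq] at hval
    apply Subtype.ext
    simp only [List.cons.injEq]
    obtain ⟨⟨h1, h2⟩, h3⟩ := hval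
    have h4 := (last_eq_of_concat_eq h3).1
    exact ⟨Prod.ext (by omega) (by omega), h4⟩
  · rintro ⟨y, ⟨hE, hP⟩, hL⟩
    obtain ⟨s, m, s', hy, hs2, hs12, hs'2, hs'12, hmS, hsum, hint⟩ := elev_structure hE.1
    have hs'val : s' = ((1 : ℤ), (-1 : ℤ)) := L1_last (hy ▸ hL)
    have hs2ge : 2 ≤ s.2 := by
      rcases eq_or_lt_of_le (by omega : (1 : ℤ) ≤ s.2) with h | h
      · exfalso
        apply hP
        refine ⟨m ++ [s'], ?_⟩
        rw [hy]
        congr 1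
        rw [← Prod.mk.eta (p := s), hs12, ← h]
      · omega
    -- preimage : (s.1 - 1, s.2 - 1) :: m
    refine ⟨⟨((s.1 - 1 : ℤ), (s.2 - 1 : ℤ)) :: m, ⟨?_, ?_, ?_, ?_⟩,
      ((s.1 - 1 : ℤ), (s.2 - 1 : ℤ)), m, rfl, by simp; omega⟩, ?_⟩
    · intro x hx
      rcases List.mem_cons.mp hx with rfl | hx'
      · have : ((s.1 - 1 : ℤ), (s.2 - 1 : ℤ)) = ((s.2 - 1 : ℤ), (s.2 - 1 : ℤ)) := by rw [hs12]
        rw [this]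
        exact up_mem (by omega)
      · exact hmS x hx'
    · intro q hq
      rcases eq_or_ne q [] with rfl | hqne
      · simp
      · obtain ⟨q', rfl, hq'⟩ := prefix_cons hq hqne
        have := hint q' hq'
        simp only [ssum_cons]
        simp
        omega
    · have hf : fsum y = 2 * (n + 1 : ℕ) := hE.2
      rw [hy, hs'val] at hf
      simp only [fsum_cons, fsum_append, fsum_cons, fsum_nil] at hf
      simp only [fsum_cons]
      push_cast at hf ⊢
      omega
    · rw [hs'val] at hsum
      simp only [ssum_cons]
      simp at hsum
      omega
    · apply Subtype.ext
      simp only [List.headI, List.tail]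
      rw [hy, hs'val]
      congr 2
      · omega
      · omega

/-- (FT) case: card equals (TF) case via reversal -/
lemma cardFT (n : ℕ) :
    Nat.card {p | (p ∈ ES (n + 1) ∧ P1 p) ∧ ¬ L1 p} =
      Nat.card {p | (p ∈ ES (n + 1) ∧ ¬ P1 p) ∧ L1 p} := by
  apply card_rev_eq
  · rintro p ⟨⟨hE, hP⟩, hnL⟩
    obtain ⟨s, m, s', hy, hs2, hs12, hs'2, hs'12, hmS, hsum, hint⟩ := elev_structure hE.1
    have hsval : s = ((1 : ℤ), (1 : ℤ)) := by
      obtain ⟨t, ht⟩ := hP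
      rw [hy] at ht
      exact (List.cons.injEq _ _ _ _ ▸ ht).1
    have hs'ne : s'.2 ≤ -2 := by
      by_contra hc
      push_neg at hc
      have hval : s' = ((1 : ℤ), (-1 : ℤ)) := by
        rw [← Prod.mk.eta (p := s'), hs'12]
        have : s'.2 = -1 := by omega
        rw [this]
        norm_num
      exact hnL ⟨s :: m, by rw [hy, hval]; simp⟩
    have hrev : rev p = neg2 s' :: (rev m ++ [neg2 s]) := by rw [hy]; simp
    refine ⟨⟨⟨(hE.1).rev, by rw [fsum_rev]; exact hE.2⟩, ?_⟩, ?_⟩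
    · rintro ⟨t, ht⟩
      rw [hrev] at ht
      have h1 := (List.cons.injEq _ _ _ _ ▸ ht).1
      have h2 := congrArg Prod.snd h1
      simp [neg2] at h2
      omega
    · refine ⟨neg2 s' :: rev m, ?_⟩
      rw [hrev, hsval]
      simp [neg2]
  · rintro p ⟨⟨hE, hP⟩, hL⟩
    obtain ⟨s, m, s', hy, hs2, hs12, hs'2, hs'12, hmS, hsum, hint⟩ := elev_structure hE.1
    have hs'val : s' = ((1 : ℤ), (-1 : ℤ)) := L1_last (hy ▸ hL)
    have hs2ge : 2 ≤ s.2 := by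
      rcases eq_or_lt_of_le (by omega : (1 : ℤ) ≤ s.2) with h | h
      · exfalso
        apply hP
        refine ⟨m ++ [s'], ?_⟩
        rw [hy]
        congr 1
        rw [← Prod.mk.eta (p := s), hs12, ← h]
      · omega
    have hrev : rev p = neg2 s' :: (rev m ++ [neg2 s]) := by rw [hy]; simp
    refine ⟨⟨⟨(hE.1).rev, by rw [fsum_rev]; exact hE.2⟩, ?_⟩, ?_⟩
    · refine ⟨rev m ++ [neg2 s], ?_⟩
      rw [hrev, hs'val]
      simp [neg2]
    · rintro ⟨t, ht⟩
      rw [hrev] at ht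
      have h2 : (neg2 s' :: rev m) ++ [neg2 s] = t ++ [((1 : ℤ), (-1 : ℤ))] := by
        simpa using ht
      have h3 := (last_eq_of_concat_eq h2).2
      have h4 := congrArg Prod.snd h3
      simp [neg2] at h4
      omega

/-- (TT) case: card = cb n -/
lemma cardTT (n : ℕ) :
    Nat.card {p | (p ∈ ES (n + 1) ∧ ¬ P1 p) ∧ ¬ L1 p} = cb n := by
  symm
  apply Nat.card_congr
  refine Equiv.ofBijective (fun w =>
    ⟨((w.1.headI).1 + 1, (w.1.headI).2 + 1) ::
      (w.1.tail.dropLast ++ [((w.1.tail.getLast?.getD ((0 : ℤ), (0 : ℤ))).1 + 1,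
        (w.1.tail.getLast?.getD ((0 : ℤ), (0 : ℤ))).2 - 1)]), ?_⟩) ⟨?_, ?_⟩
  · obtain ⟨w, hw⟩ := w
    obtain ⟨s, m, s', hwval, hs2, hs12, hs'2, hs'12, hmS, hsum, hnn, hf⟩ := bs_structure hw
    subst hwval
    have hcomp1 : (s :: (m ++ [s'])).headI = s := rfl
    have hcomp2 : (s :: (m ++ [s'])).tail.dropLast = m := by
      simp [List.dropLast_concat]
    have hcomp3 : (s :: (m ++ [s'])).tail.getLast?.getD ((0 : ℤ), (0 : ℤ)) = s' := by
      simp [List.getLast?_concat]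
    rw [hcomp1, hcomp2, hcomp3]
    have hhead : ((s.1 + 1 : ℤ), (s.2 + 1 : ℤ)) ∈ S6 := by
      have : ((s.1 + 1 : ℤ), (s.2 + 1 : ℤ)) = ((s.2 + 1 : ℤ), (s.2 + 1 : ℤ)) := by rw [hs12]
      rw [this]
      exact up_mem (by omega)
    have hlastS : ((s'.1 + 1 : ℤ), (s'.2 - 1 : ℤ)) ∈ S6 := by
      have : ((s'.1 + 1 : ℤ), (s'.2 - 1 : ℤ)) = ((1 - s'.2 : ℤ), (-(1 - s'.2) : ℤ)) := by
        rw [hs'12]; congr 1 <;> ring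
      rw [this]
      exact down_mem (r := 1 - s'.2) (by omega)
    have hterm1 : (0 : ℤ) < (((s.1 + 1 : ℤ), (s.2 + 1 : ℤ)) : Step).2 := by simp; omega
    have hterm2 : (((s.1 + 1 : ℤ), (s.2 + 1 : ℤ)) : Step).2 + ssum m +
        (((s'.1 + 1 : ℤ), (s'.2 - 1 : ℤ)) : Step).2 = 0 := by simp; omega
    refine ⟨⟨⟨?_, ?_⟩, ?_⟩, ?_⟩
    · refine elev_cons_append hhead hlastS hmS hterm1 hterm2 ?_
      intro q' hq'
      have := hnn q' hq'
      simp
      omega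
    · simp only [fsum_cons, fsum_append, fsum_cons, fsum_nil] at hf ⊢
      push_cast at hf ⊢
      omega
    · rintro ⟨t', ht'⟩
      have h1 := (List.cons.injEq _ _ _ _ ▸ ht').1
      have h2 := congrArg Prod.snd h1
      simp at h2
      omega
    · apply not_L1_of_last
      intro hc
      have h2 := congrArg Prod.fst hc
      simp at h2
      omega
  · rintro ⟨w1, hw1⟩ ⟨w2, hw2⟩ hval
    obtain ⟨s1, m1, s1', hv1, hs1a, hs1b, hs1c, hs1d, _, _, _, _⟩ := bs_structure hw1
    obtain ⟨s2, m2, s2', hv2, hs2a, hs2b, hs2c, hs2d, _, _, _, _⟩ := bs_structure hw2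
    apply Subtype.ext
    simp only
    rw [hv1, hv2]
    subst hv1; subst hv2
    simp only [Subtype.mk.injEq, List.headI, List.tail, List.dropLast_concat,
      List.getLast?_concat, Option.getD_some, List.cons.injEq, Prod.mk.injEq] at hval
    obtain ⟨⟨h1, h2⟩, h3⟩ := hval
    obtain ⟨h4, h5⟩ := last_eq_of_concat_eq h3
    have h6 : s1 = s2 := Prod.ext (by omega) (by omega)
    have h7 : s1' = s2' := by
      have ha := congrArg Prod.fst h5
      have hb := congrArg Prod.snd h5
      simp at ha hb
      exact Prod.ext (by omega) (by omega)
    rw [h6, h7, h4]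
  · rintro ⟨y, ⟨hE, hP⟩, hnL⟩
    obtain ⟨s, m, s', hy, hs2, hs12, hs'2, hs'12, hmS, hsum, hint⟩ := elev_structure hE.1
    have hs2ge : 2 ≤ s.2 := by
      rcases eq_or_lt_of_le (by omega : (1 : ℤ) ≤ s.2) with h | h
      · exfalso
        apply hP
        refine ⟨m ++ [s'], ?_⟩
        rw [hy]
        congr 1
        rw [← Prod.mk.eta (p := s), hs12, ← h]
      · omega
    have hs'ne : s'.2 ≤ -2 := by
      by_contra hc
      push_neg at hc
      have hval : s' = ((1 : ℤ), (-1 : ℤ)) := by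
        rw [← Prod.mk.eta (p := s'), hs'12]
        have : s'.2 = -1 := by omega
        rw [this]
        norm_num
      exact hnL ⟨s :: m, by rw [hy, hval]; simp⟩
    -- preimage
    set w : List Step := ((s.1 - 1 : ℤ), (s.2 - 1 : ℤ)) :: (m ++ [((s'.1 - 1 : ℤ), (s'.2 + 1 : ℤ))]) with hwdef
    have hwW : w ∈ WS n := by
      rw [hwdef]
      refine ⟨?_, ?_, ?_, ?_⟩
      · intro x hx
        rcases List.mem_cons.mp hx with rfl | hx'
        · have : ((s.1 - 1 : ℤ), (s.2 - 1 : ℤ)) = ((s.2 - 1 : ℤ), (s.2 - 1 : ℤ)) := by rw [hs12]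
          rw [this]
          exact up_mem (by omega)
        · rcases List.mem_append.mp hx' with h | h
          · exact hmS x h
          · rw [List.mem_singleton.mp h]
            have : ((s'.1 - 1 : ℤ), (s'.2 + 1 : ℤ)) = ((-1 - s'.2 : ℤ), (-(-1 - s'.2) : ℤ)) := by
              rw [hs'12]; congr 1 <;> ring
            rw [this]
            exact down_mem (r := -1 - s'.2) (by omega)
      · intro q hq
        rcases eq_or_ne q [] with rfl | hqne
        · simp
        · obtain ⟨q', rfl, hq'⟩ := prefix_cons hq hqne
          rcases prefix_append_cases hq' with h | ⟨q'', rfl, hq''⟩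
          · have := hint q' h
            simp only [ssum_cons]
            simp
            omega
          · rcases prefix_singleton hq'' with rfl | rfl
            · have := hint m (List.prefix_refl m)
              simp only [ssum_cons, ssum_append, ssum_nil]
              simp
              omega
            · simp only [ssum_cons, ssum_append, ssum_cons, ssum_nil]
              simp
              omega
      · have hf : fsum y = 2 * (n + 1 : ℕ) := hE.2
        rw [hy] at hf
        simp only [fsum_cons, fsum_append, fsum_cons, fsum_nil] at hf ⊢
        push_cast at hf ⊢
        omega
      · simp only [ssum_cons, ssum_append, ssum_cons, ssum_nil]
        simp
        omega
    have hwB : w ∈ BS n := by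
      refine ⟨hwW, ⟨((s.1 - 1 : ℤ), (s.2 - 1 : ℤ)), m ++ [((s'.1 - 1 : ℤ), (s'.2 + 1 : ℤ))],
        hwdef, ?_⟩,
        ⟨((s'.1 - 1 : ℤ), (s'.2 + 1 : ℤ)), ((s.1 - 1 : ℤ), (s.2 - 1 : ℤ)) :: m, ?_, ?_⟩⟩
      · simp
        omega
      · rw [hwdef]
        simp
      · simp
        omega
    refine ⟨⟨w, hwB⟩, ?_⟩
    apply Subtype.ext
    simp only [hwdef, List.headI, List.tail, List.dropLast_concat, List.getLast?_concat,
      Option.getD_some]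
    rw [hy]
    have e1 : ((s.1 - 1 + 1 : ℤ), (s.2 - 1 + 1 : ℤ)) = s := by
      rw [← Prod.mk.eta (p := s)]
      congr 1 <;> ring
    have e2 : ((s'.1 - 1 + 1 : ℤ), (s'.2 + 1 - 1 : ℤ)) = s' := by
      rw [← Prod.mk.eta (p := s')]
      congr 1 <;> ring
    rw [e1, e2]

/-- the elevated decrement identity -/
lemma ce_succ (n : ℕ) : ce (n + 1) = cw n + 2 * cu n + cb n := by
  have h1 := card_split_pred (ES (n + 1)) (ES_finite (n + 1)) P1
  have h2 := card_split_pred {p | p ∈ ES (n + 1) ∧ P1 p}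
    ((ES_finite (n + 1)).subset (fun p hp => hp.1)) L1
  have h3 := card_split_pred {p | p ∈ ES (n + 1) ∧ ¬ P1 p}
    ((ES_finite (n + 1)).subset (fun p hp => hp.1)) L1
  have e1 : Nat.card {p | p ∈ {p | p ∈ ES (n + 1) ∧ P1 p} ∧ L1 p} =
      Nat.card {p | (p ∈ ES (n + 1) ∧ P1 p) ∧ L1 p} := rfl
  have e2 : Nat.card {p | p ∈ {p | p ∈ ES (n + 1) ∧ P1 p} ∧ ¬ L1 p} =
      Nat.card {p | (p ∈ ES (n + 1) ∧ P1 p) ∧ ¬ L1 p} := rfl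
  have e3 : Nat.card {p | p ∈ {p | p ∈ ES (n + 1) ∧ ¬ P1 p} ∧ L1 p} =
      Nat.card {p | (p ∈ ES (n + 1) ∧ ¬ P1 p) ∧ L1 p} := rfl
  have e4 : Nat.card {p | p ∈ {p | p ∈ ES (n + 1) ∧ ¬ P1 p} ∧ ¬ L1 p} =
      Nat.card {p | (p ∈ ES (n + 1) ∧ ¬ P1 p) ∧ ¬ L1 p} := rfl
  rw [e1, e2, cardFF, cardFT, cardTF] at h2
  rw [e3, e4, cardTF, cardTT] at h3
  rw [ce, h1, h2, h3]
  omega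

end S6GF

namespace S6GF

open PowerSeries

lemma cu_zero : cu 0 = 0 := by
  have : US 0 = ∅ := by
    ext p
    simp only [Set.mem_empty_iff_false, iff_false]
    rintro ⟨hW, s, t, rfl, hs⟩
    have := eq_nil_of_fsum_eq_zero hW.1 (by simpa using hW.2.2.1)
    simp at this
  rw [cu, this]
  simp

noncomputable def Wse : PowerSeries ℚ := PowerSeries.mk (fun n => (cw n : ℚ))
noncomputable def Use : PowerSeries ℚ := PowerSeries.mk (fun n => (cu n : ℚ))
noncomputable def Bse : PowerSeries ℚ := PowerSeries.mk (fun n => (cb n : ℚ))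
noncomputable def Ese : PowerSeries ℚ := PowerSeries.mk (fun n => (ce n : ℚ))
noncomputable def Qse : PowerSeries ℚ := PowerSeries.mk (fun n => (cq n : ℚ))
noncomputable def Cse : PowerSeries ℚ := PowerSeries.mk (fun n => (cc n : ℚ))

lemma hW : Wse = 1 + X * Wse + Ese * Wse := by
  ext n
  simp only [map_add, coeff_mk, Wse, Ese, PowerSeries.coeff_one]
  cases n with
  | zero =>
    simp only [if_pos rfl, cw_zero]
    rw [PowerSeries.coeff_zero_eq_constantCoeff_apply, map_mul, constantCoeff_X]
    rw [PowerSeries.coeff_zero_eq_constantCoeff_apply, map_mul]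
    have h1 : constantCoeff (mk fun n => (ce n : ℚ)) = (ce 0 : ℚ) := by
      rw [← PowerSeries.coeff_zero_eq_constantCoeff_apply, coeff_mk]
    rw [h1, ce_zero]
    norm_num
  | succ n =>
    rw [if_neg (Nat.succ_ne_zero n), PowerSeries.coeff_succ_X_mul, coeff_mk,
      PowerSeries.coeff_mul]
    have hcw := cw_eq (n + 1) (Nat.succ_ne_zero n)
    have hcu := cu_eq (n + 1)
    simp only [coeff_mk]
    push_cast [hcw, hcu]
    ring

lemma hU : Use = Ese * Wse := by
  ext n
  rw [Use, coeff_mk, PowerSeries.coeff_mul]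
  have := cu_eq n
  simp only [Ese, Wse, coeff_mk]
  push_cast [this]
  rfl

lemma hB : Bse = Ese * Cse := by
  ext n
  rw [Bse, coeff_mk, PowerSeries.coeff_mul]
  have := cb_eq n
  simp only [Ese, Cse, coeff_mk]
  push_cast [this]
  rfl

lemma hC : Cse = 1 + Use := by
  ext n
  rw [Cse, coeff_mk, map_add, PowerSeries.coeff_one, Use, coeff_mk]
  cases n with
  | zero => rw [cc_zero, cu_zero]; norm_num
  | succ n =>
    rw [if_neg (Nat.succ_ne_zero n), cc_eq_cd (n + 1) (Nat.succ_ne_zero n), cd_eq_cu]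
    norm_num

lemma hE : Ese = X * (Wse + 2 * Use + Bse) := by
  ext n
  cases n with
  | zero =>
    rw [Ese, coeff_mk, ce_zero, PowerSeries.coeff_zero_eq_constantCoeff_apply, map_mul,
      constantCoeff_X]
    norm_num
  | succ n =>
    rw [Ese, coeff_mk, PowerSeries.coeff_succ_X_mul, map_add, map_add]
    simp only [Wse, Use, Bse, coeff_mk]
    have h2 : PowerSeries.coeff n (2 * mk fun k => (cu k : ℚ)) = 2 * (cu n : ℚ) := by
      rw [two_mul, map_add, coeff_mk]
      ring
    rw [h2, ce_succ]
    push_cast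
    ring

lemma hQ : Qse = 1 + Ese * Qse := by
  ext n
  rw [Qse, coeff_mk, map_add, PowerSeries.coeff_one, PowerSeries.coeff_mul]
  cases n with
  | zero =>
    simp only [Ese, Qse, coeff_mk, if_pos rfl]
    rw [cq_zero]
    simp [Finset.Nat.antidiagonal_zero, ce_zero]
  | succ n =>
    rw [if_neg (Nat.succ_ne_zero n)]
    have := cq_eq (n + 1) (Nat.succ_ne_zero n)
    simp only [Ese, Qse, coeff_mk]
    push_cast [this]
    ring

/-- the quadratic equation for E -/
lemma hE2 : Ese ^ 2 = Ese - 4 * X * Ese + X ^ 2 * Ese - X := by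
  have h1 : Wse * (1 - X - Ese) = 1 := by linear_combination hW
  have e5 : Ese * (1 - X - Ese) =
      X * (1 + 2 * Ese + Ese ^ 2) + X * (Ese * (1 - X - Ese)) := by
    calc Ese * (1 - X - Ese) = (X * (Wse + 2 * Use + Bse)) * (1 - X - Ese) := by rw [← hE]
    _ = X * ((Wse * (1 - X - Ese)) * (1 + 2 * Ese + Ese ^ 2)) +
        X * (Ese * (1 - X - Ese)) := by rw [hB, hC, hU]; ring
    _ = X * ((1 : PowerSeries ℚ) * (1 + 2 * Ese + Ese ^ 2)) +
        X * (Ese * (1 - X - Ese)) := by rw [h1]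
    _ = X * (1 + 2 * Ese + Ese ^ 2) + X * (Ese * (1 - X - Ese)) := by ring
  linear_combination -e5

/-- the quadratic equation for Q -/
lemma hquad : X * (X - 5) * Qse ^ 2 + (1 + 4 * X - X ^ 2) * Qse - 1 = 0 := by
  have hEQ : Ese * Qse = Qse - 1 := by linear_combination -hQ
  have h6 : (Qse - 1) ^ 2 = (1 - 4 * X + X ^ 2) * ((Qse - 1) * Qse) - X * Qse ^ 2 := by
    calc (Qse - 1) ^ 2 = (Ese * Qse) ^ 2 := by rw [hEQ]
    _ = Ese ^ 2 * Qse ^ 2 := by ring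
    _ = (Ese - 4 * X * Ese + X ^ 2 * Ese - X) * Qse ^ 2 := by rw [hE2]
    _ = (1 - 4 * X + X ^ 2) * ((Ese * Qse) * Qse) - X * Qse ^ 2 := by ring
    _ = (1 - 4 * X + X ^ 2) * ((Qse - 1) * Qse) - X * Qse ^ 2 := by rw [hEQ]
  linear_combination -h6

end S6GF

open PowerSeries in
theorem gf_A_S6 (P s : PowerSeries ℚ)
    (hP : ∀ n : ℕ, PowerSeries.coeff n P =
      if n = 0 then 1
      else (Nat.card {p : List (ℤ × ℤ) // IsPath S6 n p ∧ NoFlatOnAxis p} : ℚ))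
    (hs0 : PowerSeries.constantCoeff s = 1)
    (hs2 : s ^ 2 = (1 - PowerSeries.X) * (1 - 11 * PowerSeries.X + 7 * PowerSeries.X ^ 2 - PowerSeries.X ^ 3)) :
    2 * PowerSeries.X * (PowerSeries.X - 5) * P = -1 - 4 * PowerSeries.X + PowerSeries.X ^ 2 + s := by
  have hPQ : P = S6GF.Qse := by
    apply PowerSeries.ext
    intro n
    rw [hP n, S6GF.Qse, coeff_mk]
    split_ifs with h
    · rw [h, S6GF.cq_zero]
      norm_num
    · have cardeq : Nat.card {p : List (ℤ × ℤ) // IsPath S6 n p ∧ NoFlatOnAxis p} =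
          S6GF.cq n := by
        apply Nat.card_congr
        apply Equiv.subtypeEquivRight
        intro p
        constructor
        · rintro ⟨⟨h1, h2, h3, h4⟩, h5⟩
          exact ⟨⟨h1, h4, h2, h3⟩, h5⟩
        · rintro ⟨⟨h1, h2, h3, h4⟩, h5⟩
          exact ⟨⟨h1, h3, h4, h2⟩, h5⟩
      rw [cardeq]
  have hPq : X * (X - 5) * P ^ 2 + (1 + 4 * X - X ^ 2) * P - 1 = 0 := by
    rw [hPQ]
    exact S6GF.hquad
  have key : (2 * X * (X - 5) * P + (1 + 4 * X - X ^ 2)) ^ 2 =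
      (1 - X) * (1 - 11 * X + 7 * X ^ 2 - X ^ 3) := by
    linear_combination (4 * X * (X - 5)) * hPq
  have hts : (s - (2 * X * (X - 5) * P + (1 + 4 * X - X ^ 2))) *
      (s + (2 * X * (X - 5) * P + (1 + 4 * X - X ^ 2))) = 0 := by
    linear_combination hs2 - key
  have hne : s + (2 * X * (X - 5) * P + (1 + 4 * X - X ^ 2)) ≠ 0 := by
    intro h
    have h2 := congrArg (constantCoeff) h
    simp only [map_add, map_mul, map_sub, map_one, map_pow, constantCoeff_X, hs0,
      map_ofNat, map_zero] at h2
    norm_num at h2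
  have hst : s = 2 * X * (X - 5) * P + (1 + 4 * X - X ^ 2) := by
    rcases mul_eq_zero.mp hts with h | h
    · exact sub_eq_zero.mp h
    · exact absurd h hne
  linear_combination -hst
end

section
/- For n≥1 let a(n) denote the number of pairs (P, c) where P is a Schröder path of order n and c is a coloring of the horizontal runs of P with one of three given colors (i.e. a(n) = Σ_{P Schröder path of order n} 3^{hr(P)}). Then the formal power series F(x) = 1 + Σ_{n≥1} a(n) xⁿ over ℚ satisfies 2x(2x−1)·F(x) = 3x − 1 + √(1−10x+25x²−16x³), where the square root denotes the unique formal power series with constant term 1 whose square is 1−10x+25x²−16x³. -/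
/-- The number of pairs `(P, c)` where `P` is a Schröder path of order `n` and `c`
is a coloring of the horizontal runs of `P` with one of three colors,
i.e. `a(n) = Σ_P 3^{hr(P)}`. -/
noncomputable def aCount (n : ℕ) : ℕ :=
  Nat.card ((P : {p : List (ℤ × ℤ) // IsPath S3 n p}) × (Fin (hr P.val) → Fin 3))


namespace CSG

abbrev St := ℤ × ℤ
def U : St := (1,1)
def Dn : St := (1,-1)
def Hs : St := (2,0)

def ht (p : List St) : ℤ := (p.map Prod.snd).sum
def wd (p : List St) : ℤ := (p.map Prod.fst).sum

@[simp] lemma ht_nil : ht ([] : List St) = 0 := rfl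
@[simp] lemma wd_nil : wd ([] : List St) = 0 := rfl
@[simp] lemma ht_cons (s : St) (l : List St) : ht (s :: l) = s.2 + ht l := by simp [ht]
@[simp] lemma wd_cons (s : St) (l : List St) : wd (s :: l) = s.1 + wd l := by simp [wd]
@[simp] lemma ht_append (l₁ l₂ : List St) : ht (l₁ ++ l₂) = ht l₁ + ht l₂ := by simp [ht]
@[simp] lemma wd_append (l₁ l₂ : List St) : wd (l₁ ++ l₂) = wd l₁ + wd l₂ := by simp [wd]

lemma ht_take_drop (k : ℕ) (l : List St) : ht (l.take k) + ht (l.drop k) = ht l := by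
  rw [← ht_append, List.take_append_drop]

def stepsF : Finset St := {U, Dn, Hs}

lemma mem_stepsF {s : St} : s ∈ stepsF ↔ s = U ∨ s = Dn ∨ s = Hs := by
  simp [stepsF]

def Ok (n : ℕ) (p : List St) : Prop :=
  (∀ s ∈ p, s ∈ stepsF) ∧ wd p = 2 * (n : ℤ) ∧ ht p = 0 ∧
    ∀ k ∈ Finset.range (p.length + 1), 0 ≤ ht (p.take k)

instance (n : ℕ) : DecidablePred (Ok n) := fun _ => by unfold Ok; infer_instance

lemma nn_iff {p : List St} :
    (∀ k ∈ Finset.range (p.length + 1), 0 ≤ ht (p.take k)) ↔ ∀ q, q <+: p → 0 ≤ ht q := by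
  constructor
  · intro h q hq
    rw [List.prefix_iff_eq_take] at hq
    rw [hq]
    have hlen : q.length ≤ p.length := by
      rw [hq]; simpa using List.length_take_le q.length p
    exact h q.length (Finset.mem_range.mpr (Nat.lt_succ_of_le hlen))
  · intro h k _
    exact h _ (List.take_prefix k p)

lemma isPath_iff {n : ℕ} {p : List St} : IsPath S3 n p ↔ Ok n p := by
  unfold IsPath Ok
  have hmem : (∀ s ∈ p, s ∈ S3) ↔ (∀ s ∈ p, s ∈ stepsF) := by
    apply forall_congr'; intro s; apply imp_congr_right; intro _
    simp [S3, mem_stepsF, U, Dn, Hs]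
  rw [hmem, nn_iff]
  tauto

lemma length_le_wd {p : List St} (h : ∀ s ∈ p, s ∈ stepsF) : (p.length : ℤ) ≤ wd p := by
  induction p with
  | nil => simp
  | cons a t ih =>
    have ha := mem_stepsF.mp (h a (by simp))
    have := ih (fun s hs => h s (by simp [hs]))
    have h1 : (1 : ℤ) ≤ a.1 := by rcases ha with rfl | rfl | rfl <;> norm_num [U, Dn, Hs]
    simp only [wd_cons, List.length_cons]
    push_cast
    omega

def lsts : ℕ → Finset (List St)
  | 0 => {[]}
  | (N+1) => {[]} ∪ stepsF.biUnion fun s => (lsts N).image (s :: ·)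

lemma mem_lsts : ∀ {N : ℕ} {l : List St}, l ∈ lsts N ↔ l.length ≤ N ∧ ∀ s ∈ l, s ∈ stepsF := by
  intro N
  induction N with
  | zero =>
    intro l
    simp only [lsts, Finset.mem_singleton]
    constructor
    · rintro rfl; simp
    · rintro ⟨h1, _⟩; exact List.length_eq_zero_iff.mp (Nat.le_zero.mp h1)
  | succ N ih =>
    intro l
    simp only [lsts, Finset.mem_union, Finset.mem_singleton, Finset.mem_biUnion,
      Finset.mem_image]
    constructor
    · rintro (rfl | ⟨s, hs, t, htl, rfl⟩)
      · simp
      · obtain ⟨h1, h2⟩ := ih.mp htl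
        refine ⟨by simpa using h1, ?_⟩
        intro x hx
        rcases List.mem_cons.mp hx with rfl | hx
        · exact hs
        · exact h2 x hx
    · rintro ⟨h1, h2⟩
      cases l with
      | nil => left; rfl
      | cons a t =>
        right
        exact ⟨a, h2 a (by simp), t, ih.mpr ⟨by simpa using h1, fun s hs => h2 s (by simp [hs])⟩, rfl⟩

def pths (n : ℕ) : Finset (List St) := (lsts (2*n)).filter (Ok n)

lemma mem_pths {n : ℕ} {p : List St} : p ∈ pths n ↔ Ok n p := by
  rw [pths, Finset.mem_filter, mem_lsts]
  constructor
  · tauto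
  · intro h
    refine ⟨⟨?_, h.1⟩, h⟩
    have := length_le_wd h.1
    have := h.2.1
    omega

lemma isPath_iff_mem {n : ℕ} {p : List St} : IsPath S3 n p ↔ p ∈ pths n := by
  rw [isPath_iff, mem_pths]

def A (n : ℕ) : ℕ := ∑ p ∈ pths n, 3 ^ hr p
def G (n : ℕ) : ℕ := ∑ p ∈ (pths n).filter (fun p => p.head? = some Hs), 3 ^ hr p

lemma pths_zero : pths 0 = {[]} := by
  ext p
  rw [mem_pths, Finset.mem_singleton]
  constructor
  · intro h
    have h1 := length_le_wd h.1
    have h2 := h.2.1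
    have : p.length = 0 := by omega
    exact List.length_eq_zero_iff.mp this
  · rintro rfl
    refine ⟨by simp, by simp, by simp, by intro k _; simp⟩

lemma A_zero : A 0 = 1 := by simp [A, pths_zero, hr]
lemma G_zero : G 0 = 0 := by simp [G, pths_zero]



-- hr lemmas
@[simp] lemma hr_nil : hr ([] : List St) = 0 := rfl
@[simp] lemma hr_single (x : St) : hr [x] = 0 := rfl

lemma hr_cons (x : St) (l : List St) :
    hr (x :: l) = (if l.head? = some x ∧ x.2 = 0 then 1 else 0) + hr l := by
  cases l with
  | nil => simp [hr]
  | cons y t =>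
    show (List.countP _ ((x,y) :: (y::t).zip t)) = _
    rw [List.countP_cons]
    have : hr (y :: t) = List.countP (fun q => q.1 == q.2 && q.1.2 == 0) ((y::t).zip t) := rfl
    rw [← this]
    by_cases hxy : y = x
    · subst hxy
      by_cases h2 : y.2 = 0 <;> simp [h2, Nat.add_comm]
    · have : ¬ ((x == y) = true) := by simp [beq_iff_eq]; exact fun h => hxy h.symm
      simp only [List.head?_cons, Option.some_inj]
      rw [if_neg, if_neg]
      · omega
      · rintro ⟨rfl, _⟩; exact hxy rfl
      · simp only [Bool.and_eq_true, beq_iff_eq]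
        rintro ⟨rfl, _⟩; exact hxy rfl

lemma hr_append_cons (A B : List St) (y : St) (hy : y.2 ≠ 0) :
    hr (A ++ y :: B) = hr A + hr (y :: B) := by
  induction A with
  | nil => simp
  | cons a A ih =>
    rw [List.cons_append, hr_cons a, ih, hr_cons a A]
    cases A with
    | nil =>
      simp only [List.nil_append, List.head?_cons, List.head?_nil, hr_nil, Option.some_inj]
      have hne : ¬ (y = a ∧ a.2 = 0) := by rintro ⟨rfl, h2⟩; exact hy h2
      simpa using hne
    | cons b A' => simp only [List.cons_append, List.head?_cons]; rw [Nat.add_assoc]; congr 1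

lemma hr_U_cons (l : List St) : hr (U :: l) = hr l := by
  rw [hr_cons]; simp [U]

lemma hr_D_cons (l : List St) : hr (Dn :: l) = hr l := by
  rw [hr_cons]; simp [Dn]

lemma hr_UADB (A B : List St) : hr (U :: (A ++ Dn :: B)) = hr A + hr B := by
  rw [hr_U_cons, hr_append_cons _ _ _ (by norm_num [Dn]), hr_D_cons]

lemma hr_H_cons (l : List St) :
    hr (Hs :: l) = (if l.head? = some Hs then 1 else 0) + hr l := by
  rw [hr_cons]; simp [Hs]; congr

-- prefix over append
lemma prefix_append_cases {q l₁ l₂ : List St} (h : q <+: l₁ ++ l₂) :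
    q <+: l₁ ∨ ∃ r, r <+: l₂ ∧ q = l₁ ++ r := by
  induction l₁ generalizing q with
  | nil => right; exact ⟨q, by simpa using h, by simp⟩
  | cons a l₁ ih =>
    rw [List.cons_append, List.prefix_cons_iff] at h
    rcases h with rfl | ⟨t, rfl, ht⟩
    · left; exact List.nil_prefix
    · rcases ih ht with h | ⟨r, hr, rfl⟩
      · left; exact List.cons_prefix_cons.mpr ⟨rfl, h⟩
      · right; exact ⟨r, hr, rfl⟩

-- parity / nonnegativity of width
lemma wd_ht_even {l : List St} (h : ∀ s ∈ l, s ∈ stepsF) : ∃ z : ℤ, wd l + ht l = 2 * z := by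
  induction l with
  | nil => exact ⟨0, by simp⟩
  | cons a t ih =>
    obtain ⟨z, hz⟩ := ih (fun s hs => h s (by simp [hs]))
    rcases mem_stepsF.mp (h a (by simp)) with rfl | rfl | rfl
    · exact ⟨z + 1, by simp [U]; omega⟩
    · exact ⟨z, by simp [Dn]; omega⟩
    · exact ⟨z + 1, by simp [Hs]; omega⟩

lemma exists_order {l : List St} (h : ∀ s ∈ l, s ∈ stepsF) (h0 : ht l = 0) :
    ∃ i : ℕ, wd l = 2 * (i : ℤ) := by
  obtain ⟨z, hz⟩ := wd_ht_even h
  have hnn : 0 ≤ wd l := le_trans (by positivity) (length_le_wd h)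
  refine ⟨z.toNat, ?_⟩
  rw [h0] at hz
  omega

-- Ok of assembled path
lemma ok_UADB {i j : ℕ} {A B : List St} (hA : Ok i A) (hB : Ok j B) :
    Ok (i + j + 1) (U :: (A ++ Dn :: B)) := by
  obtain ⟨hAm, hAw, hAh, hAn⟩ := hA
  obtain ⟨hBm, hBw, hBh, hBn⟩ := hB
  rw [nn_iff] at hAn hBn
  refine ⟨?_, ?_, ?_, ?_⟩
  · intro s hs
    simp only [List.mem_cons, List.mem_append] at hs
    rcases hs with rfl | hs | hs
    · exact mem_stepsF.mpr (Or.inl rfl)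
    · exact hAm s hs
    · rcases hs with rfl | hs
      · exact mem_stepsF.mpr (Or.inr (Or.inl rfl))
      · exact hBm s hs
  · simp [U, Dn, hAw, hBw]; push_cast; ring
  · simp [U, Dn, hAh, hBh]
  · rw [nn_iff]
    intro q hq
    rcases List.prefix_cons_iff.mp hq with rfl | ⟨t, rfl, ht⟩
    · simp
    · rcases prefix_append_cases ht with h | ⟨r, hrr, rfl⟩
      · have := hAn t h
        simp [U]; omega
      · rcases List.prefix_cons_iff.mp hrr with rfl | ⟨t', rfl, ht'⟩
        · simp [U, hAh]
        · have := hBn t' ht'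
          simp [U, Dn, hAh]; omega

-- uniqueness of the first-return split
lemma split_eq_aux {A A' B B' : List St}
    (hA0 : ht A = 0)
    (hN' : ∀ q, q <+: A' → 0 ≤ ht q)
    (hlen : A.length ≤ A'.length)
    (heq : A ++ Dn :: B = A' ++ Dn :: B') : A = A' := by
  have h1 : A <+: A' ++ Dn :: B' := heq ▸ List.prefix_append A (Dn :: B)
  have h2 : A' <+: A' ++ Dn :: B' := List.prefix_append A' (Dn :: B')
  by_cases hl : A.length = A'.length
  · exact (List.prefix_of_prefix_length_le h1 h2 hlen).eq_of_length hl
  · exfalso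
    have hlt : A.length < A'.length := lt_of_le_of_ne hlen hl
    have h3 : A ++ [Dn] <+: A' ++ Dn :: B' := by
      rw [← heq]
      refine ⟨B, by simp⟩
    have h4 : A ++ [Dn] <+: A' :=
      List.prefix_of_prefix_length_le h3 h2 (by simpa using hlt)
    have := hN' _ h4
    simp [Dn, hA0] at this

lemma split_eq {A A' B B' : List St}
    (hA0 : ht A = 0) (hA0' : ht A' = 0)
    (hN : ∀ q, q <+: A → 0 ≤ ht q) (hN' : ∀ q, q <+: A' → 0 ≤ ht q)
    (heq : A ++ Dn :: B = A' ++ Dn :: B') : A = A' ∧ B = B' := by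
  have hAA : A = A' := by
    rcases le_total A.length A'.length with h | h
    · exact split_eq_aux hA0 hN' h heq
    · exact (split_eq_aux hA0' hN h heq.symm).symm
  subst hAA
  exact ⟨rfl, by simpa using List.append_cancel_left heq⟩

lemma head_cases {n : ℕ} {p : List St} (hp : Ok (n+1) p) :
    p.head? = some U ∨ p.head? = some Hs := by
  obtain ⟨hm, hw, hh, hn⟩ := hp
  cases p with
  | nil => simp [wd] at hw; omega
  | cons a t =>
    rcases mem_stepsF.mp (hm a (by simp)) with rfl | rfl | rfl
    · left; rfl
    · exfalso
      have h1 := hn 1 (by simp)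
      rw [show (Dn :: t).take 1 = [Dn] by rfl] at h1
      simp [Dn] at h1
    · right; rfl

lemma exists_split {n : ℕ} {p : List St} (hp : Ok (n+1) p) (hU : p.head? = some U) :
    ∃ i j A B, i + j = n ∧ Ok i A ∧ Ok j B ∧ p = U :: (A ++ Dn :: B) := by
  obtain ⟨hm, hw, hh, hn⟩ := hp
  rw [nn_iff] at hn
  cases p with
  | nil => simp at hU
  | cons a t =>
  simp only [List.head?_cons, Option.some_inj] at hU
  subst hU
  have hUu : U.2 = 1 := rfl
  have htt : ht t = -1 := by simp [U] at hh; omega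
  have hex : ∃ k, ht (t.take k) ≤ -1 := ⟨t.length, by simp [htt]⟩
  classical
  set m := Nat.find hex with hmdef
  have hspec : ht (t.take m) ≤ -1 := Nat.find_spec hex
  have hmin : ∀ k < m, 0 ≤ ht (t.take k) := by
    intro k hk
    have := Nat.find_min hex hk
    omega
  have hmlen : m ≤ t.length := Nat.find_min' hex (by simp [htt])
  have hm0 : m ≠ 0 := by
    intro h0
    rw [h0] at hspec
    simp at hspec
  clear_value m
  obtain ⟨m', rfl⟩ : ∃ m', m = m' + 1 := ⟨m - 1, by omega⟩
  have hlt : m' < t.length := by omega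
  have htake : t.take (m' + 1) = t.take m' ++ [t[m']] := by
    rw [List.take_succ]
    congr 1
    simp [List.getElem?_eq_getElem hlt]
  have hmem : t[m'] ∈ stepsF := hm _ (by
    exact List.mem_cons_of_mem _ (List.getElem_mem hlt))
  have hprev : 0 ≤ ht (t.take m') := hmin m' (by omega)
  have hsum : ht (t.take (m'+1)) = ht (t.take m') + (t[m']).2 := by
    rw [htake, ht_append]; simp [ht]
  have hD : t[m'] = Dn ∧ ht (t.take m') = 0 := by
    rcases mem_stepsF.mp hmem with h | h | h <;> rw [h] at hsum
    · exfalso; simp [U] at hsum; omega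
    · constructor
      · exact h
      · simp [Dn] at hsum; omega
    · exfalso; simp [Hs] at hsum; omega
  have hA0 : ht (t.take m') = 0 := hD.2
  have hdrop : t.drop m' = Dn :: t.drop (m'+1) := by
    rw [List.drop_eq_getElem_cons hlt, hD.1]
  have hsplit : t = t.take m' ++ Dn :: t.drop (m'+1) := by
    conv_lhs => rw [← List.take_append_drop m' t]
    rw [hdrop]
  -- memberships
  have hmA : ∀ s ∈ t.take m', s ∈ stepsF := fun s hs =>
    hm s (List.mem_cons_of_mem _ ((List.take_sublist _ _).mem hs))
  have hmB : ∀ s ∈ t.drop (m'+1), s ∈ stepsF := fun s hs =>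
    hm s (List.mem_cons_of_mem _ ((List.drop_sublist _ _).mem hs))
  -- heights
  have hB0 : ht (t.drop (m'+1)) = 0 := by
    have h1 := ht_take_drop (m'+1) t
    have h2 : ht (t.take (m'+1)) = -1 := by
      rw [hsum, hD.1, hA0]; simp [Dn]
    omega
  -- prefix conditions
  have hNA : ∀ q, q <+: t.take m' → 0 ≤ ht q := by
    intro q hq
    rw [List.prefix_iff_eq_take] at hq
    rw [List.take_take] at hq
    rw [hq]
    exact hmin _ (by omega)
  have hNB : ∀ q, q <+: t.drop (m'+1) → 0 ≤ ht q := by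
    intro q hq
    have hpre : U :: (t.take m' ++ Dn :: q) <+: U :: t := by
      conv_rhs => rw [hsplit]
      rw [List.cons_prefix_cons]
      refine ⟨rfl, ?_⟩
      obtain ⟨r, hr⟩ := hq
      exact ⟨r, by rw [← hr]; simp⟩
    have := hn _ hpre
    simp [U, Dn, hA0] at this
    omega
  -- orders
  obtain ⟨i, hi⟩ := exists_order hmA hA0
  obtain ⟨j, hj⟩ := exists_order hmB hB0
  have hij : i + j = n := by
    have hwt : wd t = wd (t.take m') + 1 + wd (t.drop (m'+1)) := by
      conv_lhs => rw [hsplit]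
      simp [Dn]; ring
    simp only [wd_cons] at hw
    have hU1 : U.1 = 1 := rfl
    rw [hU1, hwt, hi, hj] at hw
    push_cast at hw ⊢
    omega
  refine ⟨i, j, t.take m', t.drop (m'+1), hij, ⟨hmA, hi, hA0, nn_iff.mpr hNA⟩,
    ⟨hmB, hj, hB0, nn_iff.mpr hNB⟩, ?_⟩
  rw [← hsplit]

lemma sum_U (n : ℕ) :
    ∑ p ∈ (pths (n+1)).filter (fun p => p.head? = some U), 3 ^ hr p
      = ∑ ij ∈ Finset.HasAntidiagonal.antidiagonal n, A ij.1 * A ij.2 := by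
  have key : ∑ x ∈ (Finset.HasAntidiagonal.antidiagonal n).sigma
        (fun ij => pths ij.1 ×ˢ pths ij.2), 3 ^ hr x.2.1 * 3 ^ hr x.2.2
      = ∑ p ∈ (pths (n+1)).filter (fun p => p.head? = some U), 3 ^ hr p := by
    refine Finset.sum_bij (fun x _ => U :: (x.2.1 ++ Dn :: x.2.2)) ?_ ?_ ?_ ?_
    · rintro ⟨⟨i,j⟩, Al, Bl⟩ hx
      simp only [Finset.mem_sigma, Finset.HasAntidiagonal.mem_antidiagonal, Finset.mem_product] at hx
      obtain ⟨hij, hAl, hBl⟩ := hx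
      rw [Finset.mem_filter]
      refine ⟨mem_pths.mpr ?_, rfl⟩
      have h := ok_UADB (mem_pths.mp hAl) (mem_pths.mp hBl)
      rwa [show i + j + 1 = n + 1 by omega] at h
    · rintro ⟨⟨i,j⟩, Al, Bl⟩ hx ⟨⟨i',j'⟩, Al', Bl'⟩ hx' heq
      simp only [Finset.mem_sigma, Finset.HasAntidiagonal.mem_antidiagonal, Finset.mem_product] at hx hx'
      obtain ⟨hij, hAl, hBl⟩ := hx
      obtain ⟨hij', hAl', hBl'⟩ := hx'
      have hOA := mem_pths.mp hAl
      have hOA' := mem_pths.mp hAl'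
      simp only [List.cons.injEq, true_and] at heq
      have hAB := split_eq hOA.2.2.1 hOA'.2.2.1
        (nn_iff.mp hOA.2.2.2) (nn_iff.mp hOA'.2.2.2) heq
      obtain ⟨hA, hB⟩ := hAB
      have hii : i = i' := by
        have h1 := hOA.2.1
        have h2 := hOA'.2.1
        rw [hA] at h1
        rw [h1] at h2
        omega
      have hjj : j = j' := by omega
      subst hA; subst hB; subst hii; subst hjj
      rfl
    · intro p hp
      rw [Finset.mem_filter] at hp
      obtain ⟨hp1, hp2⟩ := hp
      obtain ⟨i, j, Al, Bl, hij, hOA, hOB, rfl⟩ := exists_split (mem_pths.mp hp1) hp2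
      refine ⟨⟨(i,j),(Al,Bl)⟩, ?_, rfl⟩
      rw [Finset.mem_sigma, Finset.HasAntidiagonal.mem_antidiagonal, Finset.mem_product]
      exact ⟨hij, mem_pths.mpr hOA, mem_pths.mpr hOB⟩
    · rintro ⟨⟨i,j⟩, Al, Bl⟩ _
      rw [hr_UADB, pow_add]
  rw [← key, Finset.sum_sigma]
  refine Finset.sum_congr rfl ?_
  rintro ⟨i,j⟩ _
  dsimp only
  rw [A, A, Finset.sum_mul_sum, Finset.sum_product]

lemma hs_cons_mem {n : ℕ} {t : List St} : Hs :: t ∈ pths (n+1) ↔ t ∈ pths n := by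
  rw [mem_pths, mem_pths]
  constructor
  · rintro ⟨hm, hw, hh, hn⟩
    rw [nn_iff] at hn
    refine ⟨fun s hs => hm s (by simp [hs]), ?_, ?_, nn_iff.mpr ?_⟩
    · simp only [wd_cons] at hw
      have : Hs.1 = 2 := rfl
      rw [this] at hw
      push_cast at hw ⊢
      omega
    · simp only [ht_cons] at hh
      have : Hs.2 = 0 := rfl
      omega
    · intro q hq
      have := hn (Hs :: q) (List.cons_prefix_cons.mpr ⟨rfl, hq⟩)
      simpa [Hs] using this
  · rintro ⟨hm, hw, hh, hn⟩
    rw [nn_iff] at hn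
    refine ⟨?_, ?_, ?_, nn_iff.mpr ?_⟩
    · intro s hs
      rcases List.mem_cons.mp hs with rfl | hs
      · exact mem_stepsF.mpr (Or.inr (Or.inr rfl))
      · exact hm s hs
    · simp [Hs, hw]; push_cast; ring
    · simp [Hs, hh]
    · intro q hq
      rcases List.prefix_cons_iff.mp hq with rfl | ⟨r, rfl, hrr⟩
      · simp
      · have := hn r hrr
        simp [Hs]
        omega

lemma G_succ (n : ℕ) : G (n+1) = A n + 2 * G n := by
  have key : G (n+1) = ∑ t ∈ pths n, 3 ^ hr (Hs :: t) := by
    rw [G]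
    refine (Finset.sum_bij (fun t _ => Hs :: t) ?_ ?_ ?_ ?_).symm
    · intro t htm
      rw [Finset.mem_filter]
      exact ⟨hs_cons_mem.mpr htm, rfl⟩
    · intro a _ b _ h
      simpa using h
    · intro p hp
      rw [Finset.mem_filter] at hp
      obtain ⟨h1, h2⟩ := hp
      cases p with
      | nil => simp at h2
      | cons a t =>
        simp only [List.head?_cons, Option.some_inj] at h2
        subst h2
        exact ⟨t, hs_cons_mem.mp h1, rfl⟩
    · intro t _; rfl
  rw [key, ← Finset.sum_filter_add_sum_filter_not (pths n) (fun t => t.head? = some Hs)]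
  have e1 : ∀ t ∈ (pths n).filter (fun t => t.head? = some Hs),
      3 ^ hr (Hs :: t) = 3 * 3 ^ hr t := by
    intro t htm
    rw [Finset.mem_filter] at htm
    rw [hr_H_cons, if_pos htm.2, pow_add]
    ring
  have e2 : ∀ t ∈ (pths n).filter (fun t => ¬ t.head? = some Hs),
      3 ^ hr (Hs :: t) = 3 ^ hr t := by
    intro t htm
    rw [Finset.mem_filter] at htm
    rw [hr_H_cons, if_neg htm.2, Nat.zero_add]
  rw [Finset.sum_congr rfl e1, Finset.sum_congr rfl e2, ← Finset.mul_sum]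
  have hsplit : (∑ t ∈ (pths n).filter (fun t => t.head? = some Hs), 3 ^ hr t)
      + ∑ t ∈ (pths n).filter (fun t => ¬ t.head? = some Hs), 3 ^ hr t = A n :=
    Finset.sum_filter_add_sum_filter_not _ _ _
  rw [show G n = ∑ t ∈ (pths n).filter (fun t => t.head? = some Hs), 3 ^ hr t from rfl] at *
  omega

lemma A_succ (n : ℕ) :
    A (n+1) = (∑ ij ∈ Finset.HasAntidiagonal.antidiagonal n, A ij.1 * A ij.2) + G (n+1) := by
  rw [A, ← Finset.sum_filter_add_sum_filter_not (pths (n+1)) (fun p => p.head? = some U)]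
  congr 1
  · exact sum_U n
  · rw [G]
    apply Finset.sum_congr _ (fun _ _ => rfl)
    apply Finset.filter_congr
    intro p hp
    have := head_cases (mem_pths.mp hp)
    constructor
    · intro h
      rcases this with h' | h'
      · exact absurd h' h
      · simp [h']
    · intro h h'
      rw [h'] at h
      have : U = Hs := by injection h
      exact absurd this (by decide)

lemma aCount_eq (n : ℕ) : aCount n = A n := by
  have e2 : ((P : {p : List St // IsPath S3 n p}) × (Fin (hr P.val) → Fin 3))
      ≃ ((P : {p : List St // p ∈ pths n}) × (Fin (hr P.val) → Fin 3)) :=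
    Equiv.sigmaCongr (Equiv.subtypeEquivRight (fun _ => isPath_iff_mem)) (fun _ => Equiv.refl _)
  rw [aCount, Nat.card_congr e2, Nat.card_eq_fintype_card, Fintype.card_sigma]
  simp only [Fintype.card_fun, Fintype.card_fin]
  rw [A, ← Finset.sum_coe_sort (pths n) (fun p => 3 ^ hr p)]

noncomputable def FA : PowerSeries ℚ := PowerSeries.mk fun n => (A n : ℚ)
noncomputable def GA : PowerSeries ℚ := PowerSeries.mk fun n => (G n : ℚ)

lemma eq1 : FA = 1 + PowerSeries.X * FA ^ 2 + GA := by
  ext n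
  cases n with
  | zero =>
    simp [FA, GA, PowerSeries.coeff_zero_eq_constantCoeff, A_zero, G_zero]
  | succ n =>
    rw [map_add, map_add, PowerSeries.coeff_one, if_neg (Nat.succ_ne_zero n),
      PowerSeries.coeff_succ_X_mul, sq, PowerSeries.coeff_mul]
    simp only [FA, GA, PowerSeries.coeff_mk]
    rw [A_succ n]
    push_cast
    ring

lemma eq2 : GA = PowerSeries.X * FA + 2 * (PowerSeries.X * GA) := by
  ext n
  cases n with
  | zero =>
    simp [FA, GA, PowerSeries.coeff_zero_eq_constantCoeff, G_zero]
  | succ n =>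
    rw [show (2 : PowerSeries ℚ) * (PowerSeries.X * GA)
        = PowerSeries.X * GA + PowerSeries.X * GA by ring]
    rw [map_add, map_add, PowerSeries.coeff_succ_X_mul, PowerSeries.coeff_succ_X_mul]
    simp only [FA, GA, PowerSeries.coeff_mk]
    rw [G_succ n]
    push_cast
    ring

end CSG

open CSG

/-- Equation (7) of the paper: with `a(n)` the number of Schröder
paths of order `n` with horizontal runs colored in one of three colors,
`F(x) = 1 + Σ_{n≥1} a(n)xⁿ` satisfies
`2x(2x−1)·F = 3x − 1 + √(1−10x+25x²−16x³)`. -/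
theorem colored_schroder_gf (F s : PowerSeries ℚ)
    (hF : ∀ n : ℕ, PowerSeries.coeff n F = if n = 0 then 1 else (aCount n : ℚ))
    (hs0 : PowerSeries.constantCoeff s = 1)
    (hs2 : s ^ 2 = 1 - 10 * PowerSeries.X + 25 * PowerSeries.X ^ 2
        - 16 * PowerSeries.X ^ 3) :
    2 * PowerSeries.X * (2 * PowerSeries.X - 1) * F = 3 * PowerSeries.X - 1 + s := by
  classical
  have hFFA : F = FA := by
    ext n
    rw [hF n, FA, PowerSeries.coeff_mk]
    cases n with
    | zero => simp [A_zero]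
    | succ n => rw [if_neg (Nat.succ_ne_zero n), aCount_eq]
  subst hFFA
  have h1 := eq1
  have h2 := eq2
  set X := (PowerSeries.X : PowerSeries ℚ) with hX
  have key : (2 * X * (2 * X - 1) * FA - 3 * X + 1) ^ 2 = s ^ 2 := by
    rw [hs2]
    linear_combination (-(4*X*(1-2*X)^2)) * h1 + (-(4*X*(1-2*X))) * h2
  have hfac : ((2 * X * (2 * X - 1) * FA - 3 * X + 1) - s)
      * ((2 * X * (2 * X - 1) * FA - 3 * X + 1) + s) = 0 := by
    linear_combination key
  rcases mul_eq_zero.mp hfac with h | h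
  · linear_combination h
  · exfalso
    have hc := congrArg (PowerSeries.constantCoeff) h
    simp only [map_add, map_sub, map_mul, map_one, map_ofNat, hX,
      PowerSeries.constantCoeff_X, hs0] at hc
    norm_num at hc
end
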